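/- arXiv:1601.03526 — 2 statements merged into one kernel-verified Lean document; each statement's English description precedes it below -/
import Mathlib

section
/- In a bispanning graph with |V| ≥ 3, each pair of disjoint spanning trees admits at least four unique symmetric edge exchanges (the unique exchange graph has minimum degree at least 4). -/
namespace MG

variable {V E : Type*}

/-- Two vertices are joined by an edge of `F`. -/
def Adj (ends : E → Sym2 V) (F : Set E) (u v : V) : Prop :=
  ∃ e ∈ F, ends e = s(u, v)

/-- Reachability using edges of `F`. -/
def Reach (ends : E → Sym2 V) (F : Set E) : V → V → Prop :=
  Relation.ReflTransGen (Adj ends F)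

/-- The edge set `F` connects all vertices of the multigraph. -/
def Conn (ends : E → Sym2 V) (F : Set E) : Prop :=
  ∀ u v : V, Reach ends F u v

/-- `F` is a spanning tree: it connects all vertices using exactly `|V| - 1` edges. -/
def IsSpanningTree (ends : E → Sym2 V) (F : Set E) : Prop :=
  Conn ends F ∧ Nat.card F = Nat.card V - 1

/-- The multigraph is bispanning: its edge set is the disjoint union of two spanning trees. -/
def Bispanning (ends : E → Sym2 V) : Prop :=
  ∃ S T : Set E, S ∪ T = Set.univ ∧ Disjoint S T ∧
    IsSpanningTree ends S ∧ IsSpanningTree ends T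

/-- Degree of a vertex: number of incident edges. -/
noncomputable def deg (ends : E → Sym2 V) (v : V) : ℕ :=
  Nat.card {e : E | v ∈ ends e}

/-- `C` is (the edge set of) a simple cycle: nonempty, connected, and every
incident vertex is incident to exactly two edges of `C`. -/
def IsCycle (ends : E → Sym2 V) (C : Set E) : Prop :=
  C.Nonempty ∧
  (∀ u v : V, (∃ e ∈ C, u ∈ ends e) → (∃ e ∈ C, v ∈ ends e) → Reach ends C u v) ∧
  (∀ v : V, (∃ e ∈ C, v ∈ ends e) → Nat.card {e : E | e ∈ C ∧ v ∈ ends e} = 2)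

/-- Number of connected components when only edges of `F` are used. -/
noncomputable def numComp (ends : E → Sym2 V) (F : Set E) : ℕ :=
  Nat.card (Quot (Reach ends F))

/-- `D` is an edge cut: removing it increases the number of components. -/
def IsEdgeCut (ends : E → Sym2 V) (D : Set E) : Prop :=
  numComp ends Set.univ < numComp ends Dᶜ

/-- A minimal edge cut: no proper subset is an edge cut. -/
def IsMinEdgeCut (ends : E → Sym2 V) (D : Set E) : Prop :=
  IsEdgeCut ends D ∧ ∀ D' : Set E, D' ⊂ D → ¬ IsEdgeCut ends D'

/-- `D` is the fundamental cut of the tree edge `e` of the spanning tree `F`: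
the minimal edge cut contained in `(E \ F) + e`, which contains `e`. -/
def IsFundCut (ends : E → Sym2 V) (F : Set E) (e : E) (D : Set E) : Prop :=
  D ⊆ insert e Fᶜ ∧ e ∈ D ∧ IsMinEdgeCut ends D

/-- `C` is the fundamental cycle of the non-tree edge `e` w.r.t. the spanning tree `F`:
the cycle contained in `F + e`, which contains `e`. -/
def IsFundCycle (ends : E → Sym2 V) (F : Set E) (e : E) (C : Set E) : Prop :=
  C ⊆ insert e F ∧ e ∈ C ∧ IsCycle ends C

end MG

namespace MGAux
open MG

variable {V E : Type*} {ends : E → Sym2 V} {F F' : Set E}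

lemma adj_symm {u v : V} (h : Adj ends F u v) : Adj ends F v u := by
  obtain ⟨e, he, h2⟩ := h
  exact ⟨e, he, h2.trans Sym2.eq_swap⟩

lemma reach_symm {u v : V} (h : Reach ends F u v) : Reach ends F v u :=
  (@Relation.ReflTransGen.stdSymm _ _ ⟨fun _ _ h => adj_symm h⟩).symm _ _ h

lemma reach_mono (hFF : F ⊆ F') {u v : V} (h : Reach ends F u v) : Reach ends F' u v :=
  Relation.ReflTransGen.mono (r := Adj ends F) (p := Adj ends F') (fun _ _ ⟨e, he, h2⟩ => ⟨e, hFF he, h2⟩) _ _ h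

lemma reach_equiv (ends : E → Sym2 V) (F : Set E) : Equivalence (Reach ends F) :=
  ⟨fun _ => .refl, reach_symm, Relation.ReflTransGen.trans⟩

lemma quot_mk_reach_eq {u v : V} :
    Quot.mk (Reach ends F) u = Quot.mk (Reach ends F) v ↔ Reach ends F u v :=
  Quot.eq.trans (Equivalence.eqvGen_iff (reach_equiv ends F))

lemma sym2_exists (z : Sym2 V) : ∃ x y, z = s(x, y) :=
  Sym2.ind (fun x y => ⟨x, y, rfl⟩) z

inductive Walk (ends : E → Sym2 V) (F : Set E) : V → V → List V → List E → Prop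
  | nil (u : V) : Walk ends F u u [u] []
  | cons {u w v : V} {g : E} {vs : List V} {es : List E} (hg : g ∈ F)
      (hends : ends g = s(u, w)) (hw : Walk ends F w v vs es) :
      Walk ends F u v (u :: vs) (g :: es)

namespace Walk

variable {u v x a w : V} {vs : List V} {es : List E}

lemma vs_shape (h : Walk ends F u v vs es) : ∃ t, vs = u :: t := by
  cases h with
  | nil => exact ⟨[], rfl⟩
  | cons _ _ _ => exact ⟨_, rfl⟩

lemma vs_ne_nil (h : Walk ends F u v vs es) : vs ≠ [] := by
  obtain ⟨t, rfl⟩ := h.vs_shape; simp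

lemma start_mem (h : Walk ends F u v vs es) : u ∈ vs := by
  obtain ⟨t, rfl⟩ := h.vs_shape; simp

lemma end_mem (h : Walk ends F u v vs es) : v ∈ vs := by
  induction h with
  | nil => simp
  | cons _ _ _ ih => simp [ih]

lemma edges_mem (h : Walk ends F u v vs es) {g : E} (hg : g ∈ es) : g ∈ F := by
  induction h with
  | nil => simp at hg
  | cons hg' _ _ ih =>
    rcases List.mem_cons.mp hg with rfl | hmem
    · exact hg'
    · exact ih hmem

lemma ends_mem (h : Walk ends F u v vs es) {g : E} (hg : g ∈ es) {z : V}
    (hz : z ∈ ends g) : z ∈ vs := by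
  induction h with
  | nil => simp at hg
  | cons hg' hends hw ih =>
    rcases List.mem_cons.mp hg with rfl | hmem
    · rw [hends, Sym2.mem_iff] at hz
      rcases hz with rfl | rfl
      · simp
      · exact List.mem_cons_of_mem _ hw.start_mem
    · exact List.mem_cons_of_mem _ (ih hmem)

lemma reach_start (h : Walk ends F u v vs es) (hw : w ∈ vs) :
    Reach ends {g | g ∈ es} u w := by
  induction h with
  | nil => rcases List.mem_singleton.mp hw with rfl; exact .refl
  | cons hg hends hwk ih =>
    rcases List.mem_cons.mp hw with rfl | hmem
    · exact .refl
    · refine Relation.ReflTransGen.head ⟨_, List.mem_cons_self, hends⟩ ?_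
      exact reach_mono (fun a ha => List.mem_cons_of_mem _ ha) (ih hmem)

lemma append {vs1 vs2 : List V} {es1 es2 : List E} (h1 : Walk ends F u a vs1 es1)
    (h2 : Walk ends F a v vs2 es2) :
    Walk ends F u v (vs1.dropLast ++ vs2) (es1 ++ es2) := by
  induction h1 generalizing v vs2 es2 with
  | nil => simpa using h2
  | cons hg hends hw ih =>
    rw [List.dropLast_cons_of_ne_nil hw.vs_ne_nil]
    exact .cons hg hends (ih h2)

lemma split (h : Walk ends F u v vs es) (ha : a ∈ vs) :
    ∃ vs1 es1 vs2 es2, Walk ends F u a vs1 es1 ∧ Walk ends F a v vs2 es2 ∧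
      es = es1 ++ es2 ∧ vs = vs1.dropLast ++ vs2 ∧ a ∉ vs1.dropLast := by
  induction h with
  | nil u =>
    have : a = u := List.mem_singleton.mp ha
    subst this
    exact ⟨[a], [], [a], [], .nil a, .nil a, rfl, by simp, by simp⟩
  | @cons u w v g vs' es' hg hends hw ih =>
    by_cases hau : a = u
    · subst hau
      exact ⟨[a], [], a :: vs', g :: es', .nil a, .cons hg hends hw, rfl, by simp, by simp⟩
    · have ha' : a ∈ vs' := by
        rcases List.mem_cons.mp ha with rfl | hmem
        · exact absurd rfl hau
        · exact hmem
      obtain ⟨vs1, es1, vs2, es2, w1, w2, hes, hvs, hnot⟩ := ih ha'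
      refine ⟨u :: vs1, g :: es1, vs2, es2, .cons hg hends w1, w2, by simp [hes], ?_, ?_⟩
      · rw [List.dropLast_cons_of_ne_nil w1.vs_ne_nil, hvs]; rfl
      · rw [List.dropLast_cons_of_ne_nil w1.vs_ne_nil]
        simp only [List.mem_cons, not_or]
        exact ⟨hau, hnot⟩

lemma exists_nodup_aux :
    ∀ (n : ℕ) {u v : V} (vs : List V) (es : List E), es.length ≤ n →
      Walk ends F u v vs es → ∃ vs' es', Walk ends F u v vs' es' ∧ vs'.Nodup := by
  classical
  intro n
  induction n with
  | zero =>
    intro u v vs es hlen h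
    cases h with
    | nil => exact ⟨_, _, .nil u, by simp⟩
    | cons _ _ _ => simp at hlen
  | succ n ih =>
    intro u v vs es hlen h
    by_cases hnd : vs.Nodup
    · exact ⟨vs, es, h, hnd⟩
    · obtain ⟨b, hb⟩ := List.exists_duplicate_iff_not_nodup.2 hnd
      have hcount : 2 ≤ vs.count b := List.duplicate_iff_two_le_count.mp hb
      obtain ⟨vs1, es1, vs2, es2, w1, w2, hes, hvs, hnot⟩ := h.split hb.mem
      have hc2 : 2 ≤ vs2.count b := by
        have h0 : vs1.dropLast.count b = 0 := List.count_eq_zero_of_not_mem hnot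
        rw [hvs, List.count_append, h0] at hcount
        simpa using hcount
      obtain ⟨t, rfl⟩ := w2.vs_shape
      have hbt : b ∈ t := by
        rw [List.count_cons_self] at hc2
        exact List.count_pos_iff.mp (by omega)
      cases w2 with
      | nil => simp at hbt
      | @cons _ w' _ g' _ es2' hg' hends' hw' =>
        obtain ⟨β1, f1, β2, f2, w3, w4, hf, _, _⟩ := hw'.split hbt
        have wfin := w1.append w4
        have h1 : es.length = es1.length + (es2'.length + 1) := by rw [hes]; simp
        have h2 : es2'.length = f1.length + f2.length := by rw [hf]; simp
        have hlen2 : (es1 ++ f2).length ≤ n := by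
          simp only [List.length_append] at *
          omega
        exact ih _ _ hlen2 wfin

lemma exists_nodup (h : Walk ends F u v vs es) :
    ∃ vs' es', Walk ends F u v vs' es' ∧ vs'.Nodup :=
  exists_nodup_aux es.length vs es le_rfl h

end Walk

lemma walk_of_reach {u v : V} (h : Reach ends F u v) :
    ∃ vs es, Walk ends F u v vs es := by
  induction h using Relation.ReflTransGen.head_induction_on with
  | refl => exact ⟨[v], [], .nil v⟩
  | head hadj _ ih =>
    obtain ⟨e, he, hends⟩ := hadj
    obtain ⟨vs, es, hw⟩ := ih
    exact ⟨_, _, .cons he hends hw⟩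

end MGAux
namespace MGAux
open MG
variable {V E : Type*} {ends : E → Sym2 V} {F : Set E}

lemma walk_inc {x v : V} {vs : List V} {es : List E} (w : V) :
    Walk ends F x v vs es → vs.Nodup → w ∈ vs →
    (w = x ∧ w = v ∧ {g | g ∈ es ∧ w ∈ ends g} = ∅) ∨
    ((w = x ∨ w = v) ∧ ¬(w = x ∧ w = v) ∧
      ∃ g₁, g₁ ∈ es ∧ {g | g ∈ es ∧ w ∈ ends g} = {g₁}) ∨
    (w ≠ x ∧ w ≠ v ∧ ∃ g₁ g₂, g₁ ∈ es ∧ g₂ ∈ es ∧ g₁ ≠ g₂ ∧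
      {g | g ∈ es ∧ w ∈ ends g} = {g₁, g₂}) := by
  intro h
  induction h with
  | nil u =>
    intro _ hmem
    have : w = u := List.mem_singleton.mp hmem
    subst this
    refine Or.inl ⟨rfl, rfl, ?_⟩
    ext g; simp
  | @cons x y v g vs' es' hg hends hw ih =>
    intro hnd hmem
    have hx_notin : x ∉ vs' := (List.nodup_cons.mp hnd).1
    have nd' : vs'.Nodup := (List.nodup_cons.mp hnd).2
    have hyv : y ∈ vs' := hw.start_mem
    have hv' : v ∈ vs' := hw.end_mem
    have hxv : x ≠ v := fun h => hx_notin (h ▸ hv')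
    have hgnot : g ∉ es' := fun hmem' =>
      hx_notin (hw.ends_mem hmem' (hends ▸ Sym2.mem_mk_left x y))
    by_cases hwx : w = x
    · subst hwx
      refine Or.inr (Or.inl ⟨Or.inl rfl, fun hc => hxv hc.2, g, List.mem_cons_self, ?_⟩)
      ext g''
      simp only [Set.mem_setOf_eq, List.mem_cons, Set.mem_singleton_iff]
      constructor
      · rintro ⟨rfl | hmem'', hw''⟩
        · rfl
        · exact absurd (hw.ends_mem hmem'' hw'') hx_notin
      · rintro rfl
        exact ⟨Or.inl rfl, hends ▸ Sym2.mem_mk_left _ _⟩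
    · have hwvs' : w ∈ vs' := by
        rcases List.mem_cons.mp hmem with rfl | hm
        · exact absurd rfl hwx
        · exact hm
      rcases ih nd' hwvs' with ⟨h1, h2, hA⟩ | ⟨hor, hnand, g₁, hg₁, hA⟩ |
        ⟨hny, hnv, g₁, g₂, hg₁, hg₂, hne, hA⟩
      · -- w = y ∧ w = v, incidence in es' empty; A = {g}
        subst h1
        refine Or.inr (Or.inl ⟨Or.inr h2, fun hc => hwx hc.1, g, List.mem_cons_self, ?_⟩)
        ext g''
        simp only [Set.mem_setOf_eq, List.mem_cons, Set.mem_singleton_iff]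
        constructor
        · rintro ⟨rfl | hmem'', hw''⟩
          · rfl
          · exact absurd ⟨hmem'', hw''⟩ (Set.eq_empty_iff_forall_notMem.mp hA g'')
        · rintro rfl
          exact ⟨Or.inl rfl, hends ▸ Sym2.mem_mk_right _ _⟩
      · by_cases hwy : w = y
        · -- w = y, not v; A = {g, g₁}
          have hwv : w ≠ v := fun hcon => hnand ⟨hwy, hcon⟩
          have hgg₁ : g ≠ g₁ := fun hcon => hgnot (hcon ▸ hg₁)
          have hin₁ : g₁ ∈ {g' | g' ∈ es' ∧ w ∈ ends g'} := by rw [hA]; exact rfl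
          refine Or.inr (Or.inr ⟨hwx, hwv, g, g₁, List.mem_cons_self,
            List.mem_cons_of_mem _ hg₁, hgg₁, ?_⟩)
          ext g''
          simp only [Set.mem_setOf_eq, List.mem_cons, Set.mem_insert_iff,
            Set.mem_singleton_iff]
          constructor
          · rintro ⟨rfl | hmem'', hw''⟩
            · exact Or.inl rfl
            · have : g'' ∈ {g | g ∈ es' ∧ w ∈ ends g} := ⟨hmem'', hw''⟩
              rw [hA] at this
              exact Or.inr this
          · rintro (rfl | rfl)
            · exact ⟨Or.inl rfl, hends ▸ (hwy ▸ Sym2.mem_mk_right _ _)⟩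
            · exact ⟨Or.inr hin₁.1, hin₁.2⟩
        · -- w ≠ y so w = v
          have hwv : w = v := by
            rcases hor with h | h
            · exact absurd h hwy
            · exact h
          have hwg : w ∉ ends g := by
            rw [hends, Sym2.mem_iff]
            rintro (rfl | rfl)
            · exact hwx rfl
            · exact hwy rfl
          have hin₁ : g₁ ∈ {g' | g' ∈ es' ∧ w ∈ ends g'} := by rw [hA]; exact rfl
          refine Or.inr (Or.inl ⟨Or.inr hwv, fun hc => hwx hc.1, g₁,
            List.mem_cons_of_mem _ hg₁, ?_⟩)
          ext g''
          simp only [Set.mem_setOf_eq, List.mem_cons, Set.mem_singleton_iff]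
          constructor
          · rintro ⟨rfl | hmem'', hw''⟩
            · exact absurd hw'' hwg
            · have : g'' ∈ {g | g ∈ es' ∧ w ∈ ends g} := ⟨hmem'', hw''⟩
              rw [hA] at this
              exact this
          · rintro rfl
            exact ⟨Or.inr hin₁.1, hin₁.2⟩
      · -- internal in es'
        have hwy : w ≠ y := hny
        have hwg : w ∉ ends g := by
          rw [hends, Sym2.mem_iff]
          rintro (rfl | rfl)
          · exact hwx rfl
          · exact hwy rfl
        have hin₁ : g₁ ∈ {g' | g' ∈ es' ∧ w ∈ ends g'} := by rw [hA]; exact Or.inl rfl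
        have hin₂ : g₂ ∈ {g' | g' ∈ es' ∧ w ∈ ends g'} := by rw [hA]; exact Or.inr rfl
        refine Or.inr (Or.inr ⟨hwx, hnv, g₁, g₂, List.mem_cons_of_mem _ hg₁,
          List.mem_cons_of_mem _ hg₂, hne, ?_⟩)
        ext g''
        simp only [Set.mem_setOf_eq, List.mem_cons, Set.mem_insert_iff, Set.mem_singleton_iff]
        constructor
        · rintro ⟨rfl | hmem'', hw''⟩
          · exact absurd hw'' hwg
          · have : g'' ∈ {g | g ∈ es' ∧ w ∈ ends g} := ⟨hmem'', hw''⟩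
            rw [hA] at this
            exact this
        · rintro (rfl | rfl)
          · exact ⟨Or.inr hin₁.1, hin₁.2⟩
          · exact ⟨Or.inr hin₂.1, hin₂.2⟩

end MGAux
namespace MGAux
open MG
variable {V E : Type*} {ends : E → Sym2 V}

lemma exists_fund_cycle {T : Set E} (hT : Conn ends T) {e : E}
    (hloop : ¬ (ends e).IsDiag) (heT : e ∉ T) :
    ∃ C : Set E, IsFundCycle ends T e C ∧
      ∀ w : V, w ∈ ends e → ∃ f ∈ T, {g | g ∈ C ∧ w ∈ ends g} = {e, f} := by
  obtain ⟨x, y, hxy⟩ := sym2_exists (ends e)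
  have hxyne : x ≠ y := fun h => hloop (by rw [hxy, h]; exact Sym2.mk_isDiag_iff.mpr rfl)
  obtain ⟨vs0, es0, hw0⟩ := walk_of_reach (hT x y)
  obtain ⟨vs, es, hw, hnd⟩ := hw0.exists_nodup
  set C : Set E := insert e {g | g ∈ es} with hC
  have hesT : ∀ g ∈ es, g ∈ T := fun g hg => hw.edges_mem hg
  have heC : e ∈ C := Set.mem_insert _ _
  have hCsub : C ⊆ insert e T := by
    rintro g (rfl | hg)
    · exact Set.mem_insert _ _
    · exact Set.mem_insert_of_mem _ (hesT g hg)
  have henotes : e ∉ es := fun h => heT (hesT e h)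
  -- vertices incident to C are in vs
  have hincvs : ∀ w : V, (∃ g ∈ C, w ∈ ends g) → w ∈ vs := by
    rintro w ⟨g, (rfl | hg), hwg⟩
    · rw [hxy, Sym2.mem_iff] at hwg
      rcases hwg with rfl | rfl
      · exact hw.start_mem
      · exact hw.end_mem
    · exact hw.ends_mem hg hwg
  -- the incidence sets at endpoints of e
  have hend : ∀ w : V, w ∈ ends e → ∃ f ∈ T, {g | g ∈ C ∧ w ∈ ends g} = {e, f} := by
    intro w hwe
    have hwvs : w ∈ vs := hincvs w ⟨e, heC, hwe⟩
    have hwxy : w = x ∨ w = y := by rw [hxy, Sym2.mem_iff] at hwe; exact hwe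
    rcases walk_inc w hw hnd hwvs with ⟨h1, h2, _⟩ | ⟨_, _, g₁, hg₁, hA⟩ |
      ⟨hnx, hny, _⟩
    · exact absurd (h1.symm.trans h2) hxyne
    · refine ⟨g₁, hesT g₁ hg₁, ?_⟩
      ext g''
      simp only [Set.mem_setOf_eq, Set.mem_insert_iff, Set.mem_singleton_iff, hC]
      constructor
      · rintro ⟨rfl | hmem, hwg⟩
        · exact Or.inl rfl
        · have : g'' ∈ {g | g ∈ es ∧ w ∈ ends g} := ⟨hmem, hwg⟩
          rw [hA] at this
          exact Or.inr this
      · have hin₁ : g₁ ∈ {g | g ∈ es ∧ w ∈ ends g} := by rw [hA]; exact rfl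
        rintro (rfl | rfl)
        · exact ⟨Or.inl rfl, hwe⟩
        · exact ⟨Or.inr hin₁.1, hin₁.2⟩
    · rcases hwxy with rfl | rfl
      · exact absurd rfl hnx
      · exact absurd rfl hny
  refine ⟨C, ⟨hCsub, heC, ?_, ?_, ?_⟩, hend⟩
  · exact ⟨e, heC⟩
  · -- connectivity
    intro a b ha hb
    have hreach : ∀ w : V, (∃ g ∈ C, w ∈ ends g) → Reach ends C x w := by
      intro w hw'
      exact reach_mono (fun g hg => Set.mem_insert_of_mem _ hg) (hw.reach_start (hincvs w hw'))
    exact Relation.ReflTransGen.trans (reach_symm (hreach a ha)) (hreach b hb)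
  · -- degree 2
    intro w hwC
    have hwvs : w ∈ vs := hincvs w hwC
    rcases walk_inc w hw hnd hwvs with ⟨h1, h2, _⟩ | ⟨hor, _, g₁, hg₁, hA⟩ |
      ⟨hnx, hny, g₁, g₂, hg₁, hg₂, hne, hA⟩
    · exact absurd (h1.symm.trans h2) hxyne
    · have hwe : w ∈ ends e := by
        rw [hxy, Sym2.mem_iff]
        exact hor
      obtain ⟨f, hfT, hset⟩ := hend w hwe
      have hef : e ≠ f := fun hcon => heT (hcon ▸ hfT)
      rw [hset, Nat.card_coe_set_eq, Set.ncard_pair hef]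
    · have hwe : w ∉ ends e := by
        rw [hxy, Sym2.mem_iff]
        rintro (rfl | rfl)
        · exact hnx rfl
        · exact hny rfl
      have : {g | g ∈ C ∧ w ∈ ends g} = {g₁, g₂} := by
        ext g''
        simp only [Set.mem_setOf_eq, Set.mem_insert_iff, Set.mem_singleton_iff, hC]
        constructor
        · rintro ⟨rfl | hmem, hwg⟩
          · exact absurd hwg hwe
          · have : g'' ∈ {g | g ∈ es ∧ w ∈ ends g} := ⟨hmem, hwg⟩
            rw [hA] at this
            exact this
        · have hin₁ : g₁ ∈ {g | g ∈ es ∧ w ∈ ends g} := by rw [hA]; exact Or.inl rfl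
          have hin₂ : g₂ ∈ {g | g ∈ es ∧ w ∈ ends g} := by rw [hA]; exact Or.inr rfl
          rintro (rfl | rfl)
          · exact ⟨Or.inr hin₁.1, hin₁.2⟩
          · exact ⟨Or.inr hin₂.1, hin₂.2⟩
      rw [this, Nat.card_coe_set_eq, Set.ncard_pair hne]

end MGAux
namespace MGAux
open MG
variable {V E : Type*} {ends : E → Sym2 V}

lemma numComp_eq_one {F : Set E} [Nonempty V] (h : Conn ends F) :
    numComp ends F = 1 := by
  rw [numComp, Nat.card_eq_one_iff_unique]
  constructor
  · constructor
    intro a b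
    induction a using Quot.ind with | _ a =>
    induction b using Quot.ind with | _ b =>
    exact Quot.sound (h a b)
  · exact ⟨Quot.mk _ (Classical.arbitrary V)⟩

lemma reach_isolated {F : Set E} {v w : V} (hv : ∀ g ∈ F, v ∉ ends g)
    (h : Reach ends F v w) : w = v := by
  induction h with
  | refl => rfl
  | tail hb hadj ih =>
    subst ih
    obtain ⟨g, hg, hends⟩ := hadj
    exact absurd (hends ▸ Sym2.mem_mk_left _ _) (hv g hg)

open Classical in
lemma reroute {S : Set E} {v x : V} {e : E}
    (hleaf : ∀ g ∈ S, v ∈ ends g → g = e) (hends : ends e = s(v, x)) (hxv : x ≠ v) {u w : V}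
    (h : Reach ends S u w) :
    Reach ends {g | g ∈ S ∧ v ∉ ends g} (if u = v then x else u) (if w = v then x else w) := by
  induction h with
  | refl => exact .refl
  | @tail b c hb hadj ih =>
    obtain ⟨g, hg, hgends⟩ := hadj
    by_cases hvg : v ∈ ends g
    · have hge : g = e := hleaf g hg hvg
      subst hge
      rw [hends] at hgends
      rcases Sym2.eq_iff.mp hgends with ⟨hbv, hcx⟩ | ⟨hcv, hbx⟩
      · -- v = b, x = c
        rw [if_pos hbv.symm] at ih
        rw [if_neg (hcx ▸ hxv : c ≠ v), ← hcx]
        exact ih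
      · -- v = c, x = b
        rw [if_neg (hbx ▸ hxv : b ≠ v), hbx.symm] at ih
        rw [if_pos hcv.symm]
        exact ih
    · have hbv : b ≠ v := by
        rintro rfl
        exact hvg (hgends ▸ Sym2.mem_mk_left _ _)
      have hcv : c ≠ v := by
        rintro rfl
        exact hvg (hgends ▸ Sym2.mem_mk_right _ _)
      rw [if_neg hbv] at ih
      rw [if_neg hcv]
      exact ih.tail ⟨g, ⟨hg, hvg⟩, hgends⟩

end MGAux
namespace MGAux
open MG
variable {V E : Type*} {ends : E → Sym2 V}

lemma leaf_fund_cut [Finite V] {S : Set E} (hS : Conn ends S)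
    (hloopall : ∀ g : E, ¬ (ends g).IsDiag) (hV : 3 ≤ Nat.card V)
    {v : V} {e : E} (hv : v ∈ ends e)
    (hleaf : ∀ g ∈ S, v ∈ ends g → g = e) :
    IsFundCut ends S e {g | v ∈ ends g} := by
  classical
  have hnev : Nonempty V := (Nat.card_pos_iff.mp (by omega)).1
  have hconnuniv : Conn ends (Set.univ : Set E) := fun a b =>
    reach_mono (Set.subset_univ S) (hS a b)
  have huniv1 : numComp ends (Set.univ : Set E) = 1 := numComp_eq_one hconnuniv
  obtain ⟨x, hx⟩ := Sym2.mem_iff_exists.mp hv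
  have hxv : x ≠ v := by
    rintro rfl
    exact hloopall e (hx ▸ Sym2.mk_isDiag_iff.mpr rfl)
  refine ⟨?_, hv, ?_, ?_⟩
  · intro g hg
    by_cases hgS : g ∈ S
    · exact (hleaf g hgS hg) ▸ Set.mem_insert _ _
    · exact Set.mem_insert_of_mem _ hgS
  · -- edge cut
    rw [IsEdgeCut, huniv1]
    haveI : Finite (Quot (Reach ends ({g | v ∈ ends g}ᶜ))) :=
      Finite.of_surjective _ Quot.mk_surjective
    apply Finite.one_lt_card_iff_nontrivial.mpr
    have hnontriv : Nontrivial V := Finite.one_lt_card_iff_nontrivial.mp (by omega)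
    obtain ⟨u, hu⟩ := exists_ne v
    refine ⟨Quot.mk _ v, Quot.mk _ u, fun hcon => ?_⟩
    have hreach : Reach ends ({g | v ∈ ends g}ᶜ) v u := quot_mk_reach_eq.mp hcon
    exact hu (reach_isolated (fun g hg hv' => Set.notMem_of_mem_compl hg hv') hreach)
  · -- minimality
    intro D' hsub hcut
    obtain ⟨f, hfD, hfD'⟩ := Set.exists_of_ssubset hsub
    obtain ⟨y, hy⟩ := Sym2.mem_iff_exists.mp (hfD : v ∈ ends f)
    have hyv : y ≠ v := by
      rintro rfl
      exact hloopall f (hy ▸ Sym2.mk_isDiag_iff.mpr rfl)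
    have hS'sub : {g | g ∈ S ∧ v ∉ ends g} ⊆ D'ᶜ := by
      rintro g ⟨_, hgv⟩ hgD'
      exact hgv (hsub.1 hgD')
    have hanchor : ∀ u : V, Reach ends D'ᶜ u y := by
      intro u
      by_cases huv : u = v
      · subst huv
        exact Relation.ReflTransGen.single ⟨f, hfD', hy⟩
      · have hrr := reroute hleaf hx hxv (hS u y)
        rw [if_neg huv, if_neg hyv] at hrr
        exact reach_mono hS'sub hrr
    have hconn : Conn ends D'ᶜ := fun a b =>
      Relation.ReflTransGen.trans (hanchor a) (reach_symm (hanchor b))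
    have h1 : numComp ends D'ᶜ = 1 := numComp_eq_one hconn
    rw [IsEdgeCut, huniv1, h1] at hcut
    omega

end MGAux
namespace MGAux
open MG
variable {V E : Type*}

lemma two_leaves [Finite V] [Finite E] (ends : E → Sym2 V)
    (hloop : ∀ e : E, ¬ (ends e).IsDiag) {S : Set E}
    (hS : IsSpanningTree ends S) (hV : 3 ≤ Nat.card V) :
    ∃ e₁ e₂ v₁ v₂, e₁ ≠ e₂ ∧
      (e₁ ∈ S ∧ v₁ ∈ ends e₁ ∧ ∀ g ∈ S, v₁ ∈ ends g → g = e₁) ∧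
      (e₂ ∈ S ∧ v₂ ∈ ends e₂ ∧ ∀ g ∈ S, v₂ ∈ ends g → g = e₂) := by
  classical
  haveI := Fintype.ofFinite V
  haveI := Fintype.ofFinite E
  set d : V → ℕ := fun v => (Finset.univ.filter (fun e => e ∈ S ∧ v ∈ ends e)).card with hd
  have key : ∀ e : E, (Finset.univ.filter (fun v => v ∈ ends e)).card = 2 := by
    intro e
    obtain ⟨x, y, hxy⟩ := sym2_exists (ends e)
    have hxyne : x ≠ y := fun h => hloop e (by rw [hxy, h]; exact Sym2.mk_isDiag_iff.mpr rfl)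
    have : Finset.univ.filter (fun v => v ∈ ends e) = {x, y} := by
      ext z
      simp [hxy, Sym2.mem_iff]
    rw [this, Finset.card_pair hxyne]
  have hcardS : (Finset.univ.filter (fun e => e ∈ S)).card = Nat.card V - 1 := by
    have h1 : Finset.univ.filter (fun e => e ∈ S) = S.toFinset := by
      ext g; simp
    rw [h1, ← Set.ncard_eq_toFinset_card', ← Nat.card_coe_set_eq]
    exact hS.2
  have hsum : ∑ v : V, d v = 2 * (Nat.card V - 1) := by
    have h1 : ∀ v, d v = ∑ e : E, if e ∈ S ∧ v ∈ ends e then 1 else 0 := fun v =>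
      Finset.card_filter _ _
    calc ∑ v : V, d v = ∑ v : V, ∑ e : E, if e ∈ S ∧ v ∈ ends e then 1 else 0 := by
          simp only [h1]
      _ = ∑ e : E, ∑ v : V, if e ∈ S ∧ v ∈ ends e then 1 else 0 := Finset.sum_comm
      _ = ∑ e : E, if e ∈ S then 2 else 0 := by
          apply Finset.sum_congr rfl
          intro e _
          by_cases heS : e ∈ S
          · simp only [heS, true_and, if_true]
            rw [← Finset.card_filter]
            exact key e
          · simp [heS]
      _ = 2 * (Finset.univ.filter (fun e => e ∈ S)).card := by
          rw [← Finset.sum_filter, Finset.sum_const, smul_eq_mul, Nat.mul_comm]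
      _ = 2 * (Nat.card V - 1) := by rw [hcardS]
  have hone : ∀ v : V, 1 ≤ d v := by
    intro v
    have hnontriv : Nontrivial V := Finite.one_lt_card_iff_nontrivial.mp (by omega)
    obtain ⟨u, hu⟩ := exists_ne v
    rcases Relation.ReflTransGen.cases_head (hS.1 v u) with heq | ⟨c, hadj, _⟩
    · exact absurd heq.symm hu
    · obtain ⟨g, hg, hgends⟩ := hadj
      have : g ∈ Finset.univ.filter (fun e => e ∈ S ∧ v ∈ ends e) := by
        simp only [Finset.mem_filter, Finset.mem_univ, true_and]
        exact ⟨hg, hgends ▸ Sym2.mem_mk_left _ _⟩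
      exact Finset.card_pos.mpr ⟨g, this⟩
  set L : Finset V := Finset.univ.filter (fun v => d v = 1) with hL
  have hLcard : 2 ≤ L.card := by
    have hpt : ∀ v : V, 2 ≤ d v + (if d v = 1 then 1 else 0) := by
      intro v
      have := hone v
      by_cases h : d v = 1
      · simp [h]
      · simp only [h, if_false]
        omega
    have hsum2 : 2 * Fintype.card V ≤ ∑ v : V, (d v + if d v = 1 then 1 else 0) := by
      calc 2 * Fintype.card V = ∑ _v : V, 2 := by simp [Nat.mul_comm]
        _ ≤ _ := Finset.sum_le_sum (fun v _ => hpt v)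
    rw [Finset.sum_add_distrib, hsum, ← Finset.card_filter] at hsum2
    have hVcard : Fintype.card V = Nat.card V := (Nat.card_eq_fintype_card).symm
    rw [hVcard] at hsum2
    rw [hL]
    omega
  have h1L : 1 < L.card := by omega
  obtain ⟨v₁, hv₁L, v₂, hv₂L, hv12⟩ := Finset.one_lt_card.mp h1L
  have hd₁ : d v₁ = 1 := (Finset.mem_filter.mp hv₁L).2
  have hd₂ : d v₂ = 1 := (Finset.mem_filter.mp hv₂L).2
  obtain ⟨e₁, he₁⟩ := Finset.card_eq_one.mp hd₁
  obtain ⟨e₂, he₂⟩ := Finset.card_eq_one.mp hd₂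
  have hprop : ∀ (v : V) (e : E),
      Finset.univ.filter (fun g => g ∈ S ∧ v ∈ ends g) = {e} →
      e ∈ S ∧ v ∈ ends e ∧ ∀ g ∈ S, v ∈ ends g → g = e := by
    intro v e he
    have hmem : e ∈ Finset.univ.filter (fun g => g ∈ S ∧ v ∈ ends g) := by
      rw [he]; exact Finset.mem_singleton_self e
    simp only [Finset.mem_filter, Finset.mem_univ, true_and] at hmem
    refine ⟨hmem.1, hmem.2, fun g hg hvg => ?_⟩
    have : g ∈ Finset.univ.filter (fun g => g ∈ S ∧ v ∈ ends g) := by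
      simp only [Finset.mem_filter, Finset.mem_univ, true_and]
      exact ⟨hg, hvg⟩
    rw [he] at this
    exact Finset.mem_singleton.mp this
  have hp₁ := hprop v₁ e₁ he₁
  have hp₂ := hprop v₂ e₂ he₂
  refine ⟨e₁, e₂, v₁, v₂, ?_, hp₁, hp₂⟩
  -- distinct leaf edges
  rintro rfl
  -- now e₁ is the common edge, with both v₁ v₂ on it
  have hends : ends e₁ = s(v₁, v₂) := by
    obtain ⟨x, y, hxy⟩ := sym2_exists (ends e₁)
    have h1 : v₁ = x ∨ v₁ = y := by
      have := hp₁.2.1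
      rw [hxy, Sym2.mem_iff] at this
      exact this
    have h2 : v₂ = x ∨ v₂ = y := by
      have := hp₂.2.1
      rw [hxy, Sym2.mem_iff] at this
      exact this
    rcases h1 with rfl | rfl <;> rcases h2 with rfl | rfl
    · exact absurd rfl hv12
    · exact hxy
    · exact hxy.trans Sym2.eq_swap
    · exact absurd rfl hv12
  have hconf : ∀ z : V, Reach ends S v₁ z → z = v₁ ∨ z = v₂ := by
    intro z h
    induction h with
    | refl => exact Or.inl rfl
    | @tail b c hb hadj ih =>
      obtain ⟨g, hg, hgends⟩ := hadj
      have hge : g = e₁ := by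
        rcases ih with h | h
        · exact hp₁.2.2 g hg (by rw [hgends, ← h]; exact Sym2.mem_mk_left _ _)
        · exact hp₂.2.2 g hg (by rw [hgends, ← h]; exact Sym2.mem_mk_left _ _)
      have hbc : s(b, c) = s(v₁, v₂) := by rw [← hgends, hge, hends]
      rcases Sym2.eq_iff.mp hbc with ⟨_, hcv⟩ | ⟨_, hcv⟩
      · exact Or.inr hcv
      · exact Or.inl hcv
  have hthird : ∃ z : V, z ≠ v₁ ∧ z ≠ v₂ := by
    by_contra hcon
    push_neg at hcon
    have hsub : (Finset.univ : Finset V) ⊆ {v₁, v₂} := by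
      intro z _
      simp only [Finset.mem_insert, Finset.mem_singleton]
      by_cases h : z = v₁
      · exact Or.inl h
      · exact Or.inr (hcon z h)
    have hle := Finset.card_le_card hsub
    have h2 : ({v₁, v₂} : Finset V).card ≤ 2 :=
      le_trans (Finset.card_insert_le _ _) (by simp)
    rw [Finset.card_univ] at hle
    have hVcard : Fintype.card V = Nat.card V := (Nat.card_eq_fintype_card).symm
    omega
  obtain ⟨z, hz1, hz2⟩ := hthird
  rcases hconf z (hS.1 v₁ z) with h | h
  · exact hz1 h
  · exact hz2 h

end MGAux
namespace MGAux
open MG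
variable {V E : Type*}

lemma leaf_exchange [Finite V] [Finite E] (ends : E → Sym2 V)
    (hloop : ∀ e : E, ¬ (ends e).IsDiag) {S T : Set E}
    (hd : Disjoint S T) (hS : IsSpanningTree ends S) (hT : IsSpanningTree ends T)
    (hV : 3 ≤ Nat.card V) {v : V} {e : E}
    (hleafS : e ∈ S ∧ v ∈ ends e ∧ ∀ g ∈ S, v ∈ ends g → g = e) :
    ∃ f ∈ T, ∃ D C : Set E, IsFundCut ends S e D ∧ IsFundCycle ends T e C ∧
      D ∩ C = {e, f} := by
  obtain ⟨heS, hv, hleaf⟩ := hleafS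
  have heT : e ∉ T := fun h => Set.disjoint_left.mp hd heS h
  obtain ⟨C, hfc, hend⟩ := exists_fund_cycle hT.1 (hloop e) heT
  obtain ⟨f, hfT, hset⟩ := hend v hv
  refine ⟨f, hfT, {g | v ∈ ends g}, C, leaf_fund_cut hS.1 hloop hV hv hleaf, hfc, ?_⟩
  rw [← hset]
  ext g
  simp only [Set.mem_inter_iff, Set.mem_setOf_eq]
  tauto

end MGAux


/-- In a bispanning graph with at least three vertices, each pair of disjoint spanning
trees admits at least four unique symmetric edge exchanges: the unique exchange graph
has minimum degree at least `4`. -/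
theorem four_unique_exchanges {V E : Type*} [Finite V] [Finite E]
    (ends : E → Sym2 V) (hloop : ∀ e : E, ¬ (ends e).IsDiag)
    (S T : Set E) (hU : S ∪ T = Set.univ) (hd : Disjoint S T)
    (hS : MG.IsSpanningTree ends S) (hT : MG.IsSpanningTree ends T)
    (hV : 3 ≤ Nat.card V) :
    4 ≤ Nat.card {p : E × E |
      (p.1 ∈ S ∧ p.2 ∈ T ∧ ∃ D C : Set E, MG.IsFundCut ends S p.1 D ∧
        MG.IsFundCycle ends T p.1 C ∧ D ∩ C = {p.1, p.2}) ∨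
      (p.1 ∈ T ∧ p.2 ∈ S ∧ ∃ D C : Set E, MG.IsFundCut ends T p.1 D ∧
        MG.IsFundCycle ends S p.1 C ∧ D ∩ C = {p.1, p.2})} := by
  classical
  obtain ⟨e₁, e₂, v₁, v₂, hne12, hl₁, hl₂⟩ := MGAux.two_leaves ends hloop hS hV
  obtain ⟨e₃, e₄, v₃, v₄, hne34, hl₃, hl₄⟩ := MGAux.two_leaves ends hloop hT hV
  obtain ⟨f₁, hf₁, D₁, C₁, hcut₁, hcyc₁, hint₁⟩ :=
    MGAux.leaf_exchange ends hloop hd hS hT hV hl₁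
  obtain ⟨f₂, hf₂, D₂, C₂, hcut₂, hcyc₂, hint₂⟩ :=
    MGAux.leaf_exchange ends hloop hd hS hT hV hl₂
  obtain ⟨f₃, hf₃, D₃, C₃, hcut₃, hcyc₃, hint₃⟩ :=
    MGAux.leaf_exchange ends hloop hd.symm hT hS hV hl₃
  obtain ⟨f₄, hf₄, D₄, C₄, hcut₄, hcyc₄, hint₄⟩ :=
    MGAux.leaf_exchange ends hloop hd.symm hT hS hV hl₄
  set P : Set (E × E) := {p : E × E |
      (p.1 ∈ S ∧ p.2 ∈ T ∧ ∃ D C : Set E, MG.IsFundCut ends S p.1 D ∧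
        MG.IsFundCycle ends T p.1 C ∧ D ∩ C = {p.1, p.2}) ∨
      (p.1 ∈ T ∧ p.2 ∈ S ∧ ∃ D C : Set E, MG.IsFundCut ends T p.1 D ∧
        MG.IsFundCycle ends S p.1 C ∧ D ∩ C = {p.1, p.2})} with hP
  have hm1 : ((e₁, f₁) : E × E) ∈ P := Or.inl ⟨hl₁.1, hf₁, D₁, C₁, hcut₁, hcyc₁, hint₁⟩
  have hm2 : ((e₂, f₂) : E × E) ∈ P := Or.inl ⟨hl₂.1, hf₂, D₂, C₂, hcut₂, hcyc₂, hint₂⟩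
  have hm3 : ((e₃, f₃) : E × E) ∈ P := Or.inr ⟨hl₃.1, hf₃, D₃, C₃, hcut₃, hcyc₃, hint₃⟩
  have hm4 : ((e₄, f₄) : E × E) ∈ P := Or.inr ⟨hl₄.1, hf₄, D₄, C₄, hcut₄, hcyc₄, hint₄⟩
  have hdis : ∀ a b : E, a ∈ S → b ∈ T → a ≠ b := by
    intro a b ha hb
    rintro rfl
    exact Set.disjoint_left.mp hd ha hb
  have h12 : ((e₁, f₁) : E × E) ≠ (e₂, f₂) := fun h => hne12 (congrArg Prod.fst h)
  have h13 : ((e₁, f₁) : E × E) ≠ (e₃, f₃) := fun h =>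
    hdis e₁ e₃ hl₁.1 hl₃.1 (congrArg Prod.fst h)
  have h14 : ((e₁, f₁) : E × E) ≠ (e₄, f₄) := fun h =>
    hdis e₁ e₄ hl₁.1 hl₄.1 (congrArg Prod.fst h)
  have h23 : ((e₂, f₂) : E × E) ≠ (e₃, f₃) := fun h =>
    hdis e₂ e₃ hl₂.1 hl₃.1 (congrArg Prod.fst h)
  have h24 : ((e₂, f₂) : E × E) ≠ (e₄, f₄) := fun h =>
    hdis e₂ e₄ hl₂.1 hl₄.1 (congrArg Prod.fst h)
  have h34 : ((e₃, f₃) : E × E) ≠ (e₄, f₄) := fun h => hne34 (congrArg Prod.fst h)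
  have hsub : ({(e₁, f₁), (e₂, f₂), (e₃, f₃), (e₄, f₄)} : Set (E × E)) ⊆ P := by
    rintro p hp
    rcases hp with rfl | rfl | rfl | rfl
    · exact hm1
    · exact hm2
    · exact hm3
    · exact hm4
  have hcard4 : ({(e₁, f₁), (e₂, f₂), (e₃, f₃), (e₄, f₄)} : Set (E × E)).ncard = 4 := by
    rw [Set.ncard_insert_of_notMem (by simp [h12, h13, h14]) (Set.toFinite _),
        Set.ncard_insert_of_notMem (by simp [h23, h24]) (Set.toFinite _),
        Set.ncard_pair h34]
  rw [Nat.card_coe_set_eq]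
  calc (4 : ℕ) = ({(e₁, f₁), (e₂, f₂), (e₃, f₃), (e₄, f₄)} : Set (E × E)).ncard := hcard4.symm
    _ ≤ P.ncard := Set.ncard_le_ncard hsub (Set.toFinite P)
end

section
/- A graph G = (V,E) with |E| = 2|V| - 2 is bispanning (its edge set decomposes into two disjoint spanning trees) if and only if for every partition P of V, the number of edges with ends in different parts is at least 2(|P| - 1). -/
namespace MG

variable {V E : Type*}

instance optionFinite {α : Type*} [Finite α] : Finite (Option α) :=
  Finite.of_equiv _ (Equiv.optionEquivSumPUnit.{0} α).symm

/-- Edges with both endpoints inside `U`. -/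
def inside (ends : E → Sym2 V) (U : Set V) : Set E := {e | ∀ w ∈ ends e, w ∈ U}

/-- The (2,2)-sparsity condition. -/
def Sparse (ends : E → Sym2 V) : Prop := ∀ U : Set V, (inside ends U).ncard ≤ 2 * U.ncard - 2

/-- Edges incident to `v`. -/
def degSet (ends : E → Sym2 V) (v : V) : Set E := {e | v ∈ ends e}

/-- Vertices other than `v`. -/
abbrev Vd (v : V) := {w : V // w ≠ v}

/-- Edges not incident to `v`. -/
abbrev Ed (ends : E → Sym2 V) (v : V) := {e : E // v ∉ ends e}

/-- The deleted graph's edge attachment. -/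
def endsDel (ends : E → Sym2 V) (v : V) (g : V → Vd v) : Ed ends v → Sym2 (Vd v) :=
  fun e => Sym2.map g (ends e.val)

/-- The contracted graph for the degree-3 move: old edges plus one new edge `x'y'`. -/
def endsOpt (ends : E → Sym2 V) (v : V) (g : V → Vd v) (x' y' : Vd v) :
    Option (Ed ends v) → Sym2 (Vd v) :=
  fun o => o.elim s(x', y') (endsDel ends v g)

/-- The setoid whose classes are `U` and singletons. -/
def blockSetoid (U : Set V) : Setoid V :=
  ⟨fun a b => a = b ∨ (a ∈ U ∧ b ∈ U),
   ⟨fun _ => Or.inl rfl,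
    by rintro a b (rfl | ⟨h1, h2⟩); exacts [Or.inl rfl, Or.inr ⟨h2, h1⟩],
    by rintro a b c (rfl | ⟨h1, h2⟩) (rfl | ⟨h3, h4⟩)
       exacts [Or.inl rfl, Or.inr ⟨h3, h4⟩, Or.inr ⟨h1, h2⟩, Or.inr ⟨h1, h4⟩]⟩⟩

/-- The set of plain edges coming from a set of edges of the contracted graph. -/
def liftOpt {v : V} {ends : E → Sym2 V} (A : Set (Option (Ed ends v))) : Set E :=
  Subtype.val '' {e : Ed ends v | some e ∈ A}

universe u₁ u₂
-- ===== part1.lean =====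







variable {ends : E → Sym2 V} {F F' : Set E} {u v w : V}

lemma Adj.symm (h : Adj ends F u v) : Adj ends F v u := by
  obtain ⟨e, he, h⟩ := h; exact ⟨e, he, by rw [h, Sym2.eq_swap]⟩

lemma reach_refl (u : V) : Reach ends F u u := Relation.ReflTransGen.refl

lemma Reach.trans (h : Reach ends F u v) (h' : Reach ends F v w) : Reach ends F u w :=
  Relation.ReflTransGen.trans h h'

lemma Reach.symm (h : Reach ends F u v) : Reach ends F v u := by
  induction h with
  | refl => exact reach_refl u
  | tail hab hbc ih => exact Relation.ReflTransGen.head hbc.symm ih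

lemma reach_equivalence : Equivalence (Reach ends F) :=
  ⟨reach_refl, Reach.symm, Reach.trans⟩

lemma Adj.reach (h : Adj ends F u v) : Reach ends F u v :=
  Relation.ReflTransGen.single h

lemma Adj.mono (hFF : F ⊆ F') (h : Adj ends F u v) : Adj ends F' u v := by
  obtain ⟨e, he, h⟩ := h; exact ⟨e, hFF he, h⟩

lemma Reach.mono (hFF : F ⊆ F') (h : Reach ends F u v) : Reach ends F' u v := by
  induction h with
  | refl => exact reach_refl _
  | tail _ hbc ih => exact Relation.ReflTransGen.tail ih (hbc.mono hFF)

lemma Reach.lift {V' E' : Type*} {ends' : E' → Sym2 V'} {F'' : Set E'} {φ : V → V'}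
    (hstep : ∀ a b, Adj ends F a b → Reach ends' F'' (φ a) (φ b))
    (h : Reach ends F u v) : Reach ends' F'' (φ u) (φ v) := by
  induction h with
  | refl => exact reach_refl _
  | tail hab hbc ih => exact ih.trans (hstep _ _ hbc)

lemma reach_empty_iff : Reach ends (∅ : Set E) u v ↔ u = v := by
  constructor
  · intro h
    induction h with
    | refl => rfl
    | tail hab hbc ih => obtain ⟨e, he, -⟩ := hbc; exact absurd he (Set.notMem_empty e)
  · rintro rfl; exact reach_refl u

lemma reach_insert_iff {e : E} {a b : V} (he : ends e = s(a, b)) :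
    Reach ends (insert e F) u v ↔
      Reach ends F u v ∨ (Reach ends F u a ∧ Reach ends F b v) ∨
        (Reach ends F u b ∧ Reach ends F a v) := by
  constructor
  · intro h
    induction h with
    | refl => exact Or.inl (reach_refl u)
    | @tail c d huc hcd ih =>
      obtain ⟨e', he', hcd'⟩ := hcd
      rcases Set.mem_insert_iff.1 he' with rfl | he'F
      · rw [he] at hcd'
        rcases Sym2.eq_iff.1 hcd' with ⟨rfl, rfl⟩ | ⟨rfl, rfl⟩
        · rcases ih with h | ⟨h1, h2⟩ | ⟨h1, h2⟩
          · exact Or.inr (Or.inl ⟨h, reach_refl _⟩)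
          · exact Or.inl (h1.trans h2.symm)
          · exact Or.inl h1
        · rcases ih with h | ⟨h1, h2⟩ | ⟨h1, h2⟩
          · exact Or.inr (Or.inr ⟨h, reach_refl _⟩)
          · exact Or.inl h1
          · exact Or.inl (h1.trans h2.symm)
      · have step : Reach ends F c d := (Adj.reach ⟨e', he'F, hcd'⟩)
        rcases ih with h | ⟨h1, h2⟩ | ⟨h1, h2⟩
        · exact Or.inl (h.trans step)
        · exact Or.inr (Or.inl ⟨h1, h2.trans step⟩)
        · exact Or.inr (Or.inr ⟨h1, h2.trans step⟩)
  · have hF : F ⊆ insert e F := Set.subset_insert e F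
    have hab : Reach ends (insert e F) a b :=
      Adj.reach ⟨e, Set.mem_insert e F, he⟩
    rintro (h | ⟨h1, h2⟩ | ⟨h1, h2⟩)
    · exact h.mono hF
    · exact ((h1.mono hF).trans hab).trans (h2.mono hF)
    · exact ((h1.mono hF).trans hab.symm).trans (h2.mono hF)


-- ===== part2.lean =====

variable {ends : E → Sym2 V} {F F' : Set E} {u v w : V}

lemma sym2_exists_rep (z : Sym2 V) : ∃ a b, z = s(a, b) :=
  Sym2.ind (fun a b => ⟨a, b, rfl⟩) z

lemma quot_mk_eq_iff (x y : V) :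
    Quot.mk (Reach ends F) x = Quot.mk (Reach ends F) y ↔ Reach ends F x y := by
  rw [Quot.eq, (reach_equivalence (ends := ends) (F := F)).eqvGen_iff]

lemma numComp_empty [Finite V] : numComp ends (∅ : Set E) = Nat.card V := by
  refine (Nat.card_eq_of_bijective (Quot.mk _) ⟨fun x y h => ?_, Quot.exists_rep⟩).symm
  exact reach_empty_iff.1 ((quot_mk_eq_iff x y).1 h)

lemma numComp_le_insert [Finite V] (e : E) :
    numComp ends F ≤ numComp ends (insert e F) + 1 := by
  obtain ⟨a, b, he⟩ := sym2_exists_rep (ends e)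
  set A := Quot (Reach ends F) with hA
  set B := Quot (Reach ends (insert e F)) with hB
  have q : A → B := Quot.map id (fun x y h => h.mono (Set.subset_insert e F))
  set x₀ : A := Quot.mk _ a with hx₀
  have hinj : Function.Injective
      (fun x : {x : A // x ≠ x₀} => (Quot.map id
        (fun x y (h : Reach ends F x y) => h.mono (Set.subset_insert e F)) x.val : B)) := by
    rintro ⟨x, hx⟩ ⟨y, hy⟩ hxy
    obtain ⟨x', rfl⟩ := Quot.exists_rep x
    obtain ⟨y', rfl⟩ := Quot.exists_rep y
    simp only [Quot.map, Subtype.mk.injEq] at hxy ⊢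
    have h2 : Reach ends (insert e F) x' y' := (quot_mk_eq_iff x' y').1 hxy
    rcases (reach_insert_iff he).1 h2 with h | ⟨h1, -⟩ | ⟨-, h2'⟩
    · exact (quot_mk_eq_iff x' y').2 h
    · exact absurd ((quot_mk_eq_iff x' a).2 h1) hx
    · exact absurd ((quot_mk_eq_iff y' a).2 h2'.symm) hy
  have h1 : Nat.card A = Nat.card {x : A // x ≠ x₀} + 1 := by
    classical
    have : DecidableEq A := Classical.decEq _
    rw [← Nat.card_eq_of_bijective _ (Equiv.optionSubtypeNe x₀).bijective]
    exact Finite.card_option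
  have h2 : Nat.card {x : A // x ≠ x₀} ≤ Nat.card B :=
    Nat.card_le_card_of_injective _ hinj
  calc Nat.card A = _ + 1 := h1
    _ ≤ Nat.card B + 1 := by omega

lemma card_le_ncard_add_numComp [Finite V] [Finite E] (F : Set E) :
    Nat.card V ≤ F.ncard + numComp ends F := by
  refine Set.Finite.induction_on F (Set.toFinite F) (by simp [numComp_empty]) ?_
  intro e F heF hFfin ih
  have := numComp_le_insert (ends := ends) (F := F) e
  rw [Set.ncard_insert_of_notMem heF (Set.toFinite F)]
  omega

lemma conn_numComp [Nonempty V] (h : Conn ends F) : numComp ends F = 1 := by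
  show Nat.card _ = 1
  rw [Nat.card_eq_one_iff_unique]
  constructor
  · constructor
    intro x y
    obtain ⟨x', rfl⟩ := Quot.exists_rep x
    obtain ⟨y', rfl⟩ := Quot.exists_rep y
    exact (quot_mk_eq_iff x' y').2 (h x' y')
  · exact ⟨Quot.mk _ (Classical.arbitrary V)⟩

lemma Conn.card_le [Finite V] [Finite E] (h : Conn ends F) :
    Nat.card V ≤ F.ncard + 1 := by
  rcases isEmpty_or_nonempty V with hV | hV
  · simp [Nat.card_of_isEmpty]
  · have := card_le_ncard_add_numComp (ends := ends) F
    rw [conn_numComp h] at this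
    exact this

-- ===== part3.lean =====

variable {ends : E → Sym2 V} {F F' : Set E} {u v w : V}



lemma inside_pair {e : E} {a b : V} (he : ends e = s(a, b)) {U : Set V} :
    e ∈ inside ends U ↔ a ∈ U ∧ b ∈ U := by
  constructor
  · intro h
    exact ⟨h a (by rw [he]; exact Sym2.mem_mk_left a b),
           h b (by rw [he]; exact Sym2.mem_mk_right a b)⟩
  · rintro ⟨ha, hb⟩ w hw
    rw [he, Sym2.mem_iff] at hw
    rcases hw with rfl | rfl <;> assumption

lemma inside_mono {U W : Set V} (h : U ⊆ W) : inside ends U ⊆ inside ends W :=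
  fun _ he w hw => h (he w hw)

lemma inside_inter {U W : Set V} : inside ends (U ∩ W) = inside ends U ∩ inside ends W := by
  ext e
  simp only [inside, Set.mem_setOf_eq, Set.mem_inter_iff]
  exact ⟨fun h => ⟨fun w hw => (h w hw).1, fun w hw => (h w hw).2⟩,
    fun ⟨h1, h2⟩ w hw => ⟨h1 w hw, h2 w hw⟩⟩

lemma inside_uncross [Finite E] (U W : Set V) :
    (inside ends U).ncard + (inside ends W).ncard ≤
      (inside ends (U ∪ W)).ncard + (inside ends (U ∩ W)).ncard := by
  have h1 := Set.ncard_union_add_ncard_inter (inside ends U) (inside ends W)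
    (Set.toFinite _) (Set.toFinite _)
  have h2 : (inside ends U ∪ inside ends W).ncard ≤ (inside ends (U ∪ W)).ncard :=
    Set.ncard_le_ncard (Set.union_subset (inside_mono Set.subset_union_left)
      (inside_mono Set.subset_union_right)) (Set.toFinite _)
  rw [inside_inter.symm] at h1
  omega

section partition
variable [Finite V] [Finite E]


lemma card_quotient_blockSetoid {U : Set V} (hU : U.Nonempty) :
    Nat.card (Quotient (blockSetoid U)) = (Nat.card V - U.ncard) + 1 := by
  classical
  obtain ⟨u₀, hu₀⟩ := hU
  have e : Quotient (blockSetoid U) ≃ Option {w : V // w ∉ U} :=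
    { toFun := Quotient.lift (fun w => if h : w ∈ U then none else some ⟨w, h⟩) (by
        rintro a b (rfl | ⟨h1, h2⟩)
        · rfl
        · simp [h1, h2])
      invFun := fun o => o.elim (Quotient.mk _ u₀) (fun w => Quotient.mk _ w.val)
      left_inv := by
        refine Quotient.ind (fun w => ?_)
        by_cases h : w ∈ U
        · simp only [Quotient.lift_mk, dif_pos h, Option.elim]
          exact Quotient.sound (Or.inr ⟨hu₀, h⟩)
        · simp [h]
      right_inv := by
        rintro (_ | ⟨w, hw⟩)
        · simp [hu₀]
        · simp [hw] }
  rw [Nat.card_eq_of_bijective e e.bijective, Finite.card_option]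
  congr 1
  have : {w : V // w ∉ U} = ↥(Uᶜ : Set V) := rfl
  rw [this, Nat.card_coe_set_eq]
  have := Set.ncard_add_ncard_compl U (Set.toFinite _) (Set.toFinite _)
  omega

lemma cross_blockSetoid (hloop : ∀ e : E, ¬ (ends e).IsDiag) {U : Set V} :
    {e : E | ¬ (Sym2.map (Quotient.mk (blockSetoid U)) (ends e)).IsDiag} =
      (inside ends U)ᶜ := by
  ext e
  obtain ⟨a, b, he⟩ := sym2_exists_rep (ends e)
  have hab : a ≠ b := by
    intro h; apply hloop e; rw [he, h]; exact Sym2.mk_isDiag_iff.2 rfl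
  simp only [Set.mem_setOf_eq, Set.mem_compl_iff, he, Sym2.map_pair_eq, Sym2.mk_isDiag_iff,
    inside_pair he]
  rw [Quotient.eq]
  show ¬ (a = b ∨ (a ∈ U ∧ b ∈ U)) ↔ _
  tauto

lemma sparse_of_partition (hloop : ∀ e : E, ¬ (ends e).IsDiag)
    (hcard : Nat.card E = 2 * Nat.card V - 2)
    (h : ∀ s : Setoid V,
      2 * (Nat.card (Quotient s) - 1) ≤
        Nat.card {e : E | ¬ (Sym2.map (Quotient.mk s) (ends e)).IsDiag}) :
    Sparse ends := by
  intro U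
  rcases U.eq_empty_or_nonempty with rfl | hU
  · have : inside ends (∅ : Set V) = ∅ := by
      ext e
      obtain ⟨a, b, he⟩ := sym2_exists_rep (ends e)
      simp [inside_pair he]
    simp [this]
  · have h1 := h (blockSetoid U)
    rw [card_quotient_blockSetoid hU, Nat.card_coe_set_eq, cross_blockSetoid hloop] at h1
    have h2 := Set.ncard_add_ncard_compl (inside ends U) (Set.toFinite _) (Set.toFinite _)
    have h3 : U.ncard ≤ Nat.card V := by
      rw [← Set.ncard_univ]; exact Set.ncard_le_ncard (Set.subset_univ U) (Set.toFinite _)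
    have h4 : 1 ≤ U.ncard := (Set.ncard_pos (Set.toFinite _)).2 hU
    omega

end partition

section forward
variable [Finite V] [Finite E]

lemma conn_quotient (s : Setoid V) (hF : Conn ends F) :
    Conn (fun e => Sym2.map (Quotient.mk s) (ends e))
      (F ∩ {e : E | ¬ (Sym2.map (Quotient.mk s) (ends e)).IsDiag}) := by
  intro q1 q2
  obtain ⟨u, rfl⟩ := Quotient.exists_rep q1
  obtain ⟨v, rfl⟩ := Quotient.exists_rep q2
  refine Reach.lift (φ := Quotient.mk s) (fun a b hab => ?_) (hF u v)
  obtain ⟨e, heF, he⟩ := hab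
  by_cases hd : (Sym2.map (Quotient.mk s) (ends e)).IsDiag
  · have : Quotient.mk s a = Quotient.mk s b := by
      rw [he, Sym2.map_pair_eq, Sym2.mk_isDiag_iff] at hd
      exact hd
    rw [this]; exact reach_refl _
  · exact Adj.reach ⟨e, ⟨heF, hd⟩, by show Sym2.map _ (ends e) = _; rw [he, Sym2.map_pair_eq]⟩

theorem partition_of_bispanning (h : Bispanning ends) :
    ∀ s : Setoid V,
      2 * (Nat.card (Quotient s) - 1) ≤
        Nat.card {e : E | ¬ (Sym2.map (Quotient.mk s) (ends e)).IsDiag} := by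
  obtain ⟨S, T, hunion, hdisj, ⟨hSconn, -⟩, ⟨hTconn, -⟩⟩ := h
  intro s
  set X := {e : E | ¬ (Sym2.map (Quotient.mk s) (ends e)).IsDiag} with hX
  have hS : Nat.card (Quotient s) ≤ (S ∩ X).ncard + 1 := (conn_quotient s hSconn).card_le
  have hT : Nat.card (Quotient s) ≤ (T ∩ X).ncard + 1 := (conn_quotient s hTconn).card_le
  have hsplit : X.ncard = (S ∩ X).ncard + (T ∩ X).ncard := by
    rw [← Set.ncard_union_eq (hdisj.mono Set.inter_subset_left Set.inter_subset_left)
      (Set.toFinite _) (Set.toFinite _), ← Set.union_inter_distrib_right, hunion,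
      Set.univ_inter]
  rw [Nat.card_coe_set_eq]
  omega

end forward

-- ===== part4.lean =====

variable {ends : E → Sym2 V} {F F' : Set E} {u v w : V}


lemma exists_other {e : E} (hl : ¬ (ends e).IsDiag) (hv : v ∈ ends e) :
    ∃ a, a ≠ v ∧ ends e = s(v, a) := by
  obtain ⟨a, b, he⟩ := sym2_exists_rep (ends e)
  have hab : a ≠ b := fun h => hl (by rw [he, h]; exact Sym2.mk_isDiag_iff.2 rfl)
  rw [he, Sym2.mem_iff] at hv
  rcases hv with rfl | rfl
  · exact ⟨b, fun h => hab h.symm, he⟩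
  · exact ⟨a, hab, by rw [he, Sym2.eq_swap]⟩

lemma inside_compl_singleton : inside ends ({v}ᶜ : Set V) = (degSet ends v)ᶜ := by
  ext e
  simp only [inside, Set.mem_setOf_eq, Set.mem_compl_iff, degSet, Set.mem_singleton_iff]
  exact ⟨fun h hv => h v hv rfl, fun h w hw hwv => h (hwv ▸ hw)⟩

section deg
variable [Finite V] [Finite E]


lemma exists_low_deg (hloop : ∀ e : E, ¬ (ends e).IsDiag) (hn : 1 ≤ Nat.card V)
    (hcard : Nat.card E = 2 * Nat.card V - 2) :
    ∃ v : V, (degSet ends v).ncard ≤ 3 := by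
  classical
  have : Nonempty V := (Nat.card_pos_iff.mp (by omega)).1
  cases nonempty_fintype V
  cases nonempty_fintype E
  by_contra hcon
  push_neg at hcon
  have hsum : ∑ e : E, (Finset.univ.filter (fun w : V => w ∈ ends e)).card
      = ∑ w : V, (Finset.univ.filter (fun e : E => w ∈ ends e)).card := by
    simp_rw [Finset.card_filter]
    exact Finset.sum_comm
  have hedge : ∀ e : E, (Finset.univ.filter (fun w : V => w ∈ ends e)).card = 2 := by
    intro e
    obtain ⟨a, b, he⟩ := sym2_exists_rep (ends e)
    have hab : a ≠ b := fun h => hloop e (by rw [he, h]; exact Sym2.mk_isDiag_iff.2 rfl)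
    have : Finset.univ.filter (fun w : V => w ∈ ends e) = {a, b} := by
      ext w
      simp [he, Sym2.mem_iff]
    rw [this, Finset.card_insert_of_notMem (by simp [hab]), Finset.card_singleton]
  have hdeg : ∀ w : V, (degSet ends w).ncard
      = (Finset.univ.filter (fun e : E => w ∈ ends e)).card := by
    intro w
    rw [Set.ncard_eq_toFinset_card']
    congr 1
    ext e
    rw [Set.mem_toFinset]
    simp [degSet]
  have h1 : ∑ e : E, (Finset.univ.filter (fun w : V => w ∈ ends e)).card
      = 2 * Fintype.card E := by
    simp [hedge, Finset.sum_const, mul_comm]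
  have h2 : 4 * Fintype.card V ≤ ∑ w : V, (Finset.univ.filter (fun e : E => w ∈ ends e)).card := by
    calc 4 * Fintype.card V = ∑ _w : V, 4 := by simp [mul_comm]
      _ ≤ _ := Finset.sum_le_sum (fun w _ => by
          have := hcon w; rw [hdeg w] at this; omega)
  rw [hsum] at h1
  have hVc : Nat.card V = Fintype.card V := Nat.card_eq_fintype_card
  have hEc : Nat.card E = Fintype.card E := Nat.card_eq_fintype_card
  omega

lemma two_le_deg (hsp : Sparse ends) (hcard : Nat.card E = 2 * Nat.card V - 2)
    (hn : 2 ≤ Nat.card V) (v : V) : 2 ≤ (degSet ends v).ncard := by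
  have h1 := hsp ({v}ᶜ : Set V)
  rw [inside_compl_singleton] at h1
  have h2 := Set.ncard_add_ncard_compl (degSet ends v) (Set.toFinite _) (Set.toFinite _)
  have h3 := Set.ncard_add_ncard_compl ({v} : Set V) (Set.toFinite _) (Set.toFinite _)
  rw [Set.ncard_singleton] at h3
  omega

end deg

-- ===== part5.lean =====

variable {ends : E → Sym2 V} {F F' : Set E} {u v w : V}

section delete
variable (ends) (v)


variable {g : V → Vd v}


variable {ends} {v}

lemma mem_ne {e : E} (hv : v ∉ ends e) (hw : w ∈ ends e) : w ≠ v :=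
  fun h => hv (h ▸ hw)

variable (hg : ∀ (w : V) (h : w ≠ v), g w = ⟨w, h⟩)
include hg

lemma endsDel_eq {e : Ed ends v} {a b : V} (he : ends e.val = s(a, b)) (ha : a ≠ v)
    (hb : b ≠ v) : endsDel ends v g e = s(⟨a, ha⟩, ⟨b, hb⟩) := by
  simp [endsDel, he, Sym2.map_pair_eq, hg a ha, hg b hb]

lemma endsDel_loopfree (hloop : ∀ e : E, ¬ (ends e).IsDiag) :
    ∀ e : Ed ends v, ¬ (endsDel ends v g e).IsDiag := by
  intro e hd
  obtain ⟨a, b, he⟩ := sym2_exists_rep (ends e.val)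
  have ha := mem_ne e.2 (he ▸ Sym2.mem_mk_left a b)
  have hb := mem_ne e.2 (he ▸ Sym2.mem_mk_right a b)
  rw [endsDel_eq hg he ha hb, Sym2.mk_isDiag_iff] at hd
  exact hloop e.val (by rw [he, (show a = b from congrArg Subtype.val hd)]
                        exact Sym2.mk_isDiag_iff.2 rfl)

lemma endsDel_down {e : Ed ends v} {p q : Vd v} (h : endsDel ends v g e = s(p, q)) :
    ends e.val = s(p.val, q.val) := by
  obtain ⟨a, b, he⟩ := sym2_exists_rep (ends e.val)
  have ha := mem_ne e.2 (he ▸ Sym2.mem_mk_left a b)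
  have hb := mem_ne e.2 (he ▸ Sym2.mem_mk_right a b)
  rw [endsDel_eq hg he ha hb] at h
  rcases Sym2.eq_iff.1 h with ⟨h1, h2⟩ | ⟨h1, h2⟩
  · rw [he, ← h1, ← h2]
  · rw [he, ← h1, ← h2, Sym2.eq_swap]

lemma insideDel (U' : Set (Vd v)) :
    Subtype.val '' (inside (endsDel ends v g) U') = inside ends (Subtype.val '' U') := by
  ext e
  constructor
  · rintro ⟨e', he', rfl⟩
    intro w hw
    have hwv : w ≠ v := mem_ne e'.2 hw
    have : g w ∈ Sym2.map g (ends e'.val) := Sym2.mem_map.2 ⟨w, hw, rfl⟩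
    have := he' (g w) this
    rw [hg w hwv] at this
    exact ⟨⟨w, hwv⟩, this, rfl⟩
  · intro h
    have hv : v ∉ ends e := by
      intro hv
      obtain ⟨u', -, hu'⟩ := h v hv
      exact u'.2 hu'
    refine ⟨⟨e, hv⟩, fun w' hw' => ?_, rfl⟩
    obtain ⟨a, ha, rfl⟩ := Sym2.mem_map.1 hw'
    obtain ⟨u', hu', hval⟩ := h a ha
    have hga : g a = u' := by subst hval; rw [hg u'.val u'.2]
    rw [hga]; exact hu'

lemma reach_down {F'' : Set (Ed ends v)} {p q : Vd v}
    (h : Reach (endsDel ends v g) F'' p q) :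
    Reach ends (Subtype.val '' F'') p.val q.val := by
  refine Reach.lift (φ := Subtype.val) (fun a b hab => ?_) h
  obtain ⟨e, he, heq⟩ := hab
  exact (Adj.reach ⟨e.val, Set.mem_image_of_mem _ he, endsDel_down hg heq⟩)

end delete

-- ===== part6.lean =====

variable {ends : E → Sym2 V} {F F' : Set E} {u v w : V}


section cards
variable [Finite V] [Finite E]

lemma card_Vd (v : V) : Nat.card (Vd v) = Nat.card V - 1 := by
  have h : Vd v = ↥(({v} : Set V)ᶜ) := rfl
  rw [h, Nat.card_coe_set_eq]
  have := Set.ncard_add_ncard_compl ({v} : Set V) (Set.toFinite _) (Set.toFinite _)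
  rw [Set.ncard_singleton] at this
  omega

lemma card_Ed (v : V) : Nat.card (Ed ends v) = Nat.card E - (degSet ends v).ncard := by
  have h : Ed ends v = ↥((degSet ends v)ᶜ) := rfl
  rw [h, Nat.card_coe_set_eq]
  have := Set.ncard_add_ncard_compl (degSet ends v) (Set.toFinite _) (Set.toFinite _)
  omega

lemma span_attach (hn : 2 ≤ Nat.card V) {S : Set E} {f : E} {c : V} (hf : f ∈ S)
    (hfc : ends f = s(v, c)) (hc : c ≠ v)
    (hkey : ∀ p q : Vd v, Reach ends S p.val q.val)
    (hcard : S.ncard = Nat.card V - 1) : IsSpanningTree ends S := by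
  constructor
  · have hvc : Reach ends S v c := Adj.reach ⟨f, hf, hfc⟩
    intro a b
    by_cases hav : a = v <;> by_cases hbv : b = v
    · subst hav; subst hbv; exact reach_refl _
    · subst hav; exact hvc.trans (hkey ⟨c, hc⟩ ⟨b, hbv⟩)
    · subst hbv; exact (hkey ⟨a, hav⟩ ⟨c, hc⟩).trans hvc.symm
    · exact hkey ⟨a, hav⟩ ⟨b, hbv⟩
  · rw [Nat.card_coe_set_eq, hcard]

end cards

section deg2
variable [Finite V] [Finite E] {g : V → Vd v}

lemma deg2_lift (hg : ∀ (w : V) (h : w ≠ v), g w = ⟨w, h⟩) (hn : 2 ≤ Nat.card V)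
    {e₁ e₂ : E} {a b : V} (hdeg : degSet ends v = {e₁, e₂}) (h12 : e₁ ≠ e₂)
    (he₁ : ends e₁ = s(v, a)) (ha : a ≠ v) (he₂ : ends e₂ = s(v, b)) (hb : b ≠ v)
    (hbs : Bispanning (endsDel ends v g)) : Bispanning ends := by
  obtain ⟨S', T', hu', hd', ⟨hcS', hcardS'⟩, ⟨hcT', hcardT'⟩⟩ := hbs
  have hv₁ : v ∈ ends e₁ := he₁ ▸ Sym2.mem_mk_left v a
  have hv₂ : v ∈ ends e₂ := he₂ ▸ Sym2.mem_mk_left v b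
  have hnotim : ∀ (A : Set (Ed ends v)) (e : E), v ∈ ends e → e ∉ Subtype.val '' A := by
    rintro A e hv ⟨e', -, rfl⟩; exact e'.2 hv
  have hcS : (Subtype.val '' S' ∪ {e₁}).ncard = Nat.card V - 1 := by
    rw [Set.union_singleton, Set.ncard_insert_of_notMem (hnotim S' e₁ hv₁) (Set.toFinite _),
      Set.ncard_image_of_injective _ Subtype.val_injective]
    rw [Nat.card_coe_set_eq, card_Vd v] at hcardS'
    omega
  have hcT : (Subtype.val '' T' ∪ {e₂}).ncard = Nat.card V - 1 := by
    rw [Set.union_singleton, Set.ncard_insert_of_notMem (hnotim T' e₂ hv₂) (Set.toFinite _),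
      Set.ncard_image_of_injective _ Subtype.val_injective]
    rw [Nat.card_coe_set_eq, card_Vd v] at hcardT'
    omega
  refine ⟨Subtype.val '' S' ∪ {e₁}, Subtype.val '' T' ∪ {e₂}, ?_, ?_, ?_, ?_⟩
  · rw [Set.eq_univ_iff_forall]
    intro e
    by_cases hv : v ∈ ends e
    · have : e ∈ degSet ends v := hv
      rw [hdeg] at this
      rcases this with rfl | rfl
      · exact Or.inl (Or.inr rfl)
      · exact Or.inr (Or.inr rfl)
    · have : (⟨e, hv⟩ : Ed ends v) ∈ S' ∪ T' := hu' ▸ Set.mem_univ _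
      rcases this with h | h
      · exact Or.inl (Or.inl ⟨⟨e, hv⟩, h, rfl⟩)
      · exact Or.inr (Or.inl ⟨⟨e, hv⟩, h, rfl⟩)
  · rw [Set.disjoint_left]
    rintro e (⟨e', he', rfl⟩ | he) (⟨e'', he'', he''eq⟩ | heq)
    · have : e'' = e' := Subtype.val_injective he''eq
      exact Set.disjoint_left.1 hd' he' (this ▸ he'')
    · exact e'.2 (heq ▸ hv₂)
    · simp only [Set.mem_singleton_iff] at he; subst he
      exact e''.2 (he''eq ▸ hv₁)
    · simp only [Set.mem_singleton_iff] at he heq; exact h12 (he ▸ heq ▸ rfl)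
  · exact span_attach hn (Or.inr rfl) he₁ ha
      (fun p q => (reach_down hg (hcS' p q)).mono Set.subset_union_left) hcS
  · exact span_attach hn (Or.inr rfl) he₂ hb
      (fun p q => (reach_down hg (hcT' p q)).mono Set.subset_union_left) hcT

end deg2

section deg3
variable [Finite V] [Finite E] {g : V → Vd v}


variable {x' y' : Vd v}

omit [Finite V] [Finite E] in
lemma reachOpt_down (hg : ∀ (w : V) (h : w ≠ v), g w = ⟨w, h⟩)
    {A : Set (Option (Ed ends v))} {S : Set E}
    (hsub : ∀ e : Ed ends v, some e ∈ A → e.val ∈ S)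
    (hnone : none ∈ A → Reach ends S x'.val y'.val)
    {p q : Vd v} (h : Reach (endsOpt ends v g x' y') A p q) :
    Reach ends S p.val q.val := by
  refine Reach.lift (φ := Subtype.val) (fun c d hcd => ?_) h
  obtain ⟨o, ho, heq⟩ := hcd
  match o with
  | some e => exact Adj.reach ⟨e.val, hsub e ho, endsDel_down hg heq⟩
  | none =>
    have heq' : s(x', y') = s(c, d) := heq
    rcases Sym2.eq_iff.1 heq' with ⟨h1, h2⟩ | ⟨h1, h2⟩
    · rw [← h1, ← h2]; exact hnone ho
    · rw [← h1, ← h2]; exact (hnone ho).symm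


omit [Finite E] in
lemma liftOpt_sub {A : Set (Option (Ed ends v))} {e : E} (h : e ∈ liftOpt (v := v) A) :
    v ∉ ends e := by
  obtain ⟨e', -, rfl⟩ := h; exact e'.2

lemma ncard_liftOpt (A : Set (Option (Ed ends v))) :
    (liftOpt (v := v) A).ncard = (A \ {none}).ncard := by
  rw [liftOpt, Set.ncard_image_of_injective _ Subtype.val_injective]
  rw [← Set.ncard_image_of_injective {e : Ed ends v | some e ∈ A}
    (Option.some_injective (Ed ends v))]
  congr 1
  ext o
  constructor
  · rintro ⟨e, he, rfl⟩; exact ⟨he, by simp⟩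
  · rintro ⟨ho, hne⟩
    match o with
    | none => simp at hne
    | some e => exact ⟨e, ho, rfl⟩

lemma mem_liftOpt {A : Set (Option (Ed ends v))} {e : Ed ends v} :
    e.val ∈ liftOpt (v := v) A ↔ some e ∈ A := by
  constructor
  · rintro ⟨e', he', heq⟩
    rwa [Subtype.val_injective heq] at he'
  · intro h; exact ⟨e, h, rfl⟩

lemma deg3_build (hg : ∀ (w : V) (h : w ≠ v), g w = ⟨w, h⟩) (hn : 3 ≤ Nat.card V)
    {f₁ f₂ f₃ : E} {x y z : V}
    (hdeg : degSet ends v = {f₁, f₂, f₃}) (h12 : f₁ ≠ f₂) (h13 : f₁ ≠ f₃) (h23 : f₂ ≠ f₃)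
    (hf₁ : ends f₁ = s(v, x)) (hx : x ≠ v) (hf₂ : ends f₂ = s(v, y)) (hy : y ≠ v)
    (hf₃ : ends f₃ = s(v, z)) (hz : z ≠ v)
    (hx' : x'.val = x) (hy' : y'.val = y)
    {S' T' : Set (Option (Ed ends v))} (hu' : S' ∪ T' = Set.univ) (hd' : Disjoint S' T')
    (hS' : IsSpanningTree (endsOpt ends v g x' y') S')
    (hT' : IsSpanningTree (endsOpt ends v g x' y') T')
    (hnS : none ∈ S') : Bispanning ends := by
  obtain ⟨hcS', hcardS'⟩ := hS'
  obtain ⟨hcT', hcardT'⟩ := hT'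
  have hnT : none ∉ T' := fun h => Set.disjoint_left.1 hd' hnS h
  have hv₁ : v ∈ ends f₁ := hf₁ ▸ Sym2.mem_mk_left v x
  have hv₂ : v ∈ ends f₂ := hf₂ ▸ Sym2.mem_mk_left v y
  have hv₃ : v ∈ ends f₃ := hf₃ ▸ Sym2.mem_mk_left v z
  set S : Set E := liftOpt (v := v) S' ∪ {f₁, f₂} with hSdef
  set T : Set E := liftOpt (v := v) T' ∪ {f₃} with hTdef
  -- membership facts
  have hf₁S : f₁ ∈ S := Or.inr (Or.inl rfl)
  have hf₂S : f₂ ∈ S := Or.inr (Or.inr rfl)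
  have hf₃T : f₃ ∈ T := Or.inr rfl
  -- cardinalities
  have hcardVd := card_Vd (V := V) v
  have hcS : S.ncard = Nat.card V - 1 := by
    have h1 : f₂ ∉ liftOpt (v := v) S' := fun h => liftOpt_sub h hv₂
    have h2 : f₁ ∉ insert f₂ (liftOpt (v := v) S') := by
      rintro (h | h)
      · exact h12 h
      · exact liftOpt_sub h hv₁
    have hSeq : S = insert f₁ (insert f₂ (liftOpt (v := v) S')) := by
      rw [hSdef, Set.union_comm, Set.insert_union, Set.singleton_union]
    rw [hSeq, Set.ncard_insert_of_notMem h2 (Set.toFinite _),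
      Set.ncard_insert_of_notMem h1 (Set.toFinite _), ncard_liftOpt,
      Set.ncard_diff_singleton_of_mem hnS]
    have hS'pos : 1 ≤ S'.ncard := (Set.ncard_pos (Set.toFinite _)).2 ⟨none, hnS⟩
    rw [Nat.card_coe_set_eq, hcardVd] at hcardS'
    omega
  have hcT : T.ncard = Nat.card V - 1 := by
    have h1 : f₃ ∉ liftOpt (v := v) T' := fun h => liftOpt_sub h hv₃
    rw [hTdef, Set.union_singleton, Set.ncard_insert_of_notMem h1 (Set.toFinite _),
      ncard_liftOpt]
    have : T' \ {none} = T' := Set.diff_singleton_eq_self hnT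
    rw [this]
    rw [Nat.card_coe_set_eq, hcardVd] at hcardT'
    omega
  refine ⟨S, T, ?_, ?_, ?_, ?_⟩
  · rw [Set.eq_univ_iff_forall]
    intro e
    by_cases hv : v ∈ ends e
    · have : e ∈ degSet ends v := hv
      rw [hdeg] at this
      rcases this with rfl | rfl | rfl
      · exact Or.inl hf₁S
      · exact Or.inl hf₂S
      · exact Or.inr hf₃T
    · have : (some ⟨e, hv⟩ : Option (Ed ends v)) ∈ S' ∪ T' := hu' ▸ Set.mem_univ _
      rcases this with h | h
      · exact Or.inl (Or.inl (mem_liftOpt.2 h))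
      · exact Or.inr (Or.inl (mem_liftOpt.2 h))
  · rw [Set.disjoint_left]
    rintro e (he | he) (he' | he')
    · obtain ⟨e₀, he₀, rfl⟩ := he
      have := mem_liftOpt.1 he'
      exact Set.disjoint_left.1 hd' he₀ this
    · obtain ⟨e₀, -, rfl⟩ := he
      simp only [Set.mem_singleton_iff] at he'
      exact e₀.2 (he' ▸ hv₃)
    · rcases he with rfl | rfl
      · exact liftOpt_sub he' hv₁
      · exact liftOpt_sub he' hv₂
    · simp only [Set.mem_singleton_iff] at he'
      rcases he with rfl | rfl
      · exact h13 he'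
      · exact h23 he'
  · refine span_attach (by omega) hf₁S hf₁ hx (fun p q => ?_) hcS
    refine reachOpt_down (ends := ends) (x' := x') (y' := y') (A := S') (S := S) hg (fun e he => Or.inl (mem_liftOpt.2 he)) (fun _ => ?_) (hcS' p q)
    rw [hx', hy']
    exact ((Adj.reach ⟨f₁, hf₁S, hf₁⟩).symm).trans (Adj.reach ⟨f₂, hf₂S, hf₂⟩)
  · refine span_attach (by omega) hf₃T hf₃ hz (fun p q => ?_) hcT
    exact reachOpt_down (ends := ends) (x' := x') (y' := y') (A := T') (S := T) hg (fun e he => Or.inl (mem_liftOpt.2 he))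
      (fun h => absurd h hnT) (hcT' p q)

lemma deg3_lift (hg : ∀ (w : V) (h : w ≠ v), g w = ⟨w, h⟩) (hn : 3 ≤ Nat.card V)
    {f₁ f₂ f₃ : E} {x y z : V}
    (hdeg : degSet ends v = {f₁, f₂, f₃}) (h12 : f₁ ≠ f₂) (h13 : f₁ ≠ f₃) (h23 : f₂ ≠ f₃)
    (hf₁ : ends f₁ = s(v, x)) (hx : x ≠ v) (hf₂ : ends f₂ = s(v, y)) (hy : y ≠ v)
    (hf₃ : ends f₃ = s(v, z)) (hz : z ≠ v)
    (hx' : x'.val = x) (hy' : y'.val = y)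
    (hbs : Bispanning (endsOpt ends v g x' y')) : Bispanning ends := by
  obtain ⟨S', T', hu', hd', hS', hT'⟩ := hbs
  have : (none : Option (Ed ends v)) ∈ S' ∪ T' := hu' ▸ Set.mem_univ _
  rcases this with h | h
  · exact deg3_build hg hn hdeg h12 h13 h23 hf₁ hx hf₂ hy hf₃ hz hx' hy' hu' hd' hS' hT' h
  · exact deg3_build hg hn hdeg h12 h13 h23 hf₁ hx hf₂ hy hf₃ hz hx' hy'
      (by rw [Set.union_comm] at hu'; exact hu') hd'.symm hT' hS' h

end deg3

-- ===== part7.lean =====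

variable {ends : E → Sym2 V} {u v w : V}

section goodpair
variable [Finite V] [Finite E]

lemma ncard_triple {α : Type*} {e₁ e₂ e₃ : α} (h12 : e₁ ≠ e₂) (h13 : e₁ ≠ e₃)
    (h23 : e₂ ≠ e₃) : ({e₁, e₂, e₃} : Set α).ncard = 3 := by
  rw [Set.ncard_insert_of_notMem (by simp [h12, h13]) (Set.toFinite _),
    Set.ncard_insert_of_notMem (by simp [h23]) (Set.toFinite _), Set.ncard_singleton]

lemma third_in (hsp : Sparse ends) {f₁ f₂ f₃ : E} {x y z : V}
    (h12 : f₁ ≠ f₂) (h13 : f₁ ≠ f₃) (h23 : f₂ ≠ f₃)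
    (hf₁ : ends f₁ = s(v, x)) (hf₂ : ends f₂ = s(v, y)) (hf₃ : ends f₃ = s(v, z))
    {U : Set V} (hxU : x ∈ U) (hyU : y ∈ U) (hzU : z ∈ U) (hvU : v ∉ U) :
    (inside ends U).ncard + 3 ≤ 2 * U.ncard := by
  have hmem : ∀ (f : E) (c : V), ends f = s(v, c) → c ∈ U → f ∈ inside ends (insert v U) :=
    fun f c hf hc => (inside_pair hf).2 ⟨Set.mem_insert v U, Set.mem_insert_of_mem _ hc⟩
  have hnot : ∀ (f : E) (c : V), ends f = s(v, c) → f ∉ inside ends U :=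
    fun f c hf hmem => hvU ((inside_pair hf).1 hmem).1
  have hsub : insert f₁ (insert f₂ (insert f₃ (inside ends U))) ⊆ inside ends (insert v U) := by
    intro e he
    rcases he with rfl | rfl | rfl | he
    · exact hmem _ _ hf₁ hxU
    · exact hmem _ _ hf₂ hyU
    · exact hmem _ _ hf₃ hzU
    · exact inside_mono (Set.subset_insert v U) he
  have hcard : (insert f₁ (insert f₂ (insert f₃ (inside ends U)))).ncard
      = (inside ends U).ncard + 3 := by
    rw [Set.ncard_insert_of_notMem (by
        rintro (rfl | rfl | h)
        exacts [h12 rfl, h13 rfl, hnot _ _ hf₁ h]) (Set.toFinite _),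
      Set.ncard_insert_of_notMem (by
        rintro (rfl | h)
        exacts [h23 rfl, hnot _ _ hf₂ h]) (Set.toFinite _),
      Set.ncard_insert_of_notMem (hnot _ _ hf₃) (Set.toFinite _)]
  have h1 : (inside ends (insert v U)).ncard ≤ 2 * (insert v U).ncard - 2 := hsp _
  have h2 : (insert v U).ncard = U.ncard + 1 :=
    Set.ncard_insert_of_notMem hvU (Set.toFinite _)
  have h3 := Set.ncard_le_ncard hsub (Set.toFinite _)
  omega

lemma good_pair (hsp : Sparse ends) (hloop : ∀ e : E, ¬ (ends e).IsDiag)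
    {e₁ e₂ e₃ : E} {a₁ a₂ a₃ : V}
    (hdeg : degSet ends v = {e₁, e₂, e₃}) (h12 : e₁ ≠ e₂) (h13 : e₁ ≠ e₃) (h23 : e₂ ≠ e₃)
    (he₁ : ends e₁ = s(v, a₁)) (ha₁ : a₁ ≠ v)
    (he₂ : ends e₂ = s(v, a₂)) (ha₂ : a₂ ≠ v)
    (he₃ : ends e₃ = s(v, a₃)) (ha₃ : a₃ ≠ v) :
    ∃ (f₁ f₂ f₃ : E) (x y z : V),
      degSet ends v = {f₁, f₂, f₃} ∧ f₁ ≠ f₂ ∧ f₁ ≠ f₃ ∧ f₂ ≠ f₃ ∧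
      ends f₁ = s(v, x) ∧ x ≠ v ∧ ends f₂ = s(v, y) ∧ y ≠ v ∧
      ends f₃ = s(v, z) ∧ z ≠ v ∧ x ≠ y ∧
      ∀ U : Set V, x ∈ U → y ∈ U → v ∉ U →
        (inside ends U).ncard + 1 ≤ 2 * U.ncard - 2 := by
  classical
  -- not all endpoints equal
  have hne : ¬ (a₁ = a₂ ∧ a₁ = a₃) := by
    rintro ⟨rfl, rfl⟩
    have hU : ({e₁, e₂, e₃} : Set E) ⊆ inside ends ({v, a₁} : Set V) := by
      rintro e (rfl | rfl | rfl)
      · exact (inside_pair he₁).2 ⟨Or.inl rfl, Or.inr rfl⟩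
      · exact (inside_pair he₂).2 ⟨Or.inl rfl, Or.inr rfl⟩
      · exact (inside_pair he₃).2 ⟨Or.inl rfl, Or.inr rfl⟩
    have h3 : 3 ≤ (inside ends ({v, a₁} : Set V)).ncard := by
      rw [← ncard_triple h12 h13 h23]
      exact Set.ncard_le_ncard hU (Set.toFinite _)
    have hsp' := hsp ({v, a₁} : Set V)
    have h2 : ({v, a₁} : Set V).ncard = 2 := by
      rw [Set.ncard_insert_of_notMem (by simp [Ne.symm ha₁]) (Set.toFinite _),
        Set.ncard_singleton]
    omega
  -- helper: goodness when the third endpoint is forced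
  have hforce : ∀ (f₁ f₂ f₃ : E) (x y z : V), f₁ ≠ f₂ → f₁ ≠ f₃ → f₂ ≠ f₃ →
      ends f₁ = s(v, x) → ends f₂ = s(v, y) → ends f₃ = s(v, z) →
      (z = x ∨ z = y) →
      ∀ U : Set V, x ∈ U → y ∈ U → v ∉ U →
        (inside ends U).ncard + 1 ≤ 2 * U.ncard - 2 := by
    intro f₁ f₂ f₃ x y z hf12 hf13 hf23 hf₁ hf₂ hf₃ hz U hxU hyU hvU
    have hzU : z ∈ U := by rcases hz with rfl | rfl <;> assumption
    have := third_in hsp hf12 hf13 hf23 hf₁ hf₂ hf₃ hxU hyU hzU hvU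
    have hU2 : 2 ≤ U.ncard := by
      have : ({x} : Set V).ncard ≤ U.ncard :=
        Set.ncard_le_ncard (by simpa using hxU) (Set.toFinite _)
      rw [Set.ncard_singleton] at this
      -- we need 2; get it from the inequality itself
      omega
    omega
  by_cases h1223 : a₁ = a₂
  · -- a₃ ≠ a₁
    have ha31 : a₃ ≠ a₁ := fun h => hne ⟨h1223, h.symm⟩
    refine ⟨e₁, e₃, e₂, a₁, a₃, a₂, ?_, h13, h12, Ne.symm h23, he₁, ha₁, he₃, ha₃, he₂, ha₂,
      Ne.symm ha31, hforce e₁ e₃ e₂ a₁ a₃ a₂ h13 h12 (Ne.symm h23) he₁ he₃ he₂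
        (Or.inl h1223.symm)⟩
    rw [hdeg]; ext e; simp; tauto
  by_cases h1323 : a₁ = a₃
  · refine ⟨e₁, e₂, e₃, a₁, a₂, a₃, hdeg, h12, h13, h23, he₁, ha₁, he₂, ha₂, he₃, ha₃,
      h1223, hforce e₁ e₂ e₃ a₁ a₂ a₃ h12 h13 h23 he₁ he₂ he₃ (Or.inl h1323.symm)⟩
  by_cases h2323 : a₂ = a₃
  · refine ⟨e₁, e₂, e₃, a₁, a₂, a₃, hdeg, h12, h13, h23, he₁, ha₁, he₂, ha₂, he₃, ha₃,
      h1223, hforce e₁ e₂ e₃ a₁ a₂ a₃ h12 h13 h23 he₁ he₂ he₃ (Or.inr h2323.symm)⟩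
  -- all distinct
  by_cases hg12 : ∀ U : Set V, a₁ ∈ U → a₂ ∈ U → v ∉ U →
      (inside ends U).ncard + 1 ≤ 2 * U.ncard - 2
  · exact ⟨e₁, e₂, e₃, a₁, a₂, a₃, hdeg, h12, h13, h23, he₁, ha₁, he₂, ha₂, he₃, ha₃,
      h1223, hg12⟩
  by_cases hg13 : ∀ U : Set V, a₁ ∈ U → a₃ ∈ U → v ∉ U →
      (inside ends U).ncard + 1 ≤ 2 * U.ncard - 2
  · refine ⟨e₁, e₃, e₂, a₁, a₃, a₂, ?_, h13, h12, Ne.symm h23, he₁, ha₁, he₃, ha₃, he₂, ha₂,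
      h1323, hg13⟩
    rw [hdeg]; ext e; simp; tauto
  exfalso
  push_neg at hg12 hg13
  obtain ⟨U₁, hU₁a, hU₁b, hU₁v, hU₁bad⟩ := hg12
  obtain ⟨U₂, hU₂a, hU₂c, hU₂v, hU₂bad⟩ := hg13
  have hsp₁ := hsp U₁
  have hsp₂ := hsp U₂
  have hspI := hsp (U₁ ∩ U₂)
  have huncross := inside_uncross (ends := ends) U₁ U₂
  have hvertex := Set.ncard_union_add_ncard_inter U₁ U₂ (Set.toFinite _) (Set.toFinite _)
  have hthird := third_in hsp h12 h13 h23 he₁ he₂ he₃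
    (Set.mem_union_left _ hU₁a) (Set.mem_union_left _ hU₁b) (Set.mem_union_right _ hU₂c)
    (by rintro (h | h); exacts [hU₁v h, hU₂v h])
  have hU₁2 : 2 ≤ U₁.ncard := by
    have hsub : ({a₁, a₂} : Set V) ⊆ U₁ := by rintro w (rfl | rfl) <;> assumption
    have := Set.ncard_le_ncard hsub (Set.toFinite _)
    rw [Set.ncard_insert_of_notMem (by simpa using h1223) (Set.toFinite _),
      Set.ncard_singleton] at this
    exact this
  have hU₂2 : 2 ≤ U₂.ncard := by
    have hsub : ({a₁, a₃} : Set V) ⊆ U₂ := by rintro w (rfl | rfl) <;> assumption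
    have := Set.ncard_le_ncard hsub (Set.toFinite _)
    rw [Set.ncard_insert_of_notMem (by simpa using h1323) (Set.toFinite _),
      Set.ncard_singleton] at this
    exact this
  have hI1 : 1 ≤ (U₁ ∩ U₂).ncard :=
    (Set.ncard_pos (Set.toFinite _)).2 ⟨a₁, hU₁a, hU₂a⟩
  have hIle : (U₁ ∩ U₂).ncard ≤ U₁.ncard :=
    Set.ncard_le_ncard Set.inter_subset_left (Set.toFinite _)
  omega

end goodpair

section sparsetransfer
variable [Finite V] [Finite E] {g : V → Vd v}

lemma sparse_del (hg : ∀ (w : V) (h : w ≠ v), g w = ⟨w, h⟩) (hsp : Sparse ends) :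
    Sparse (endsDel ends v g) := by
  intro U'
  have h1 : (inside (endsDel ends v g) U').ncard
      = (inside ends (Subtype.val '' U')).ncard := by
    rw [← insideDel hg U', Set.ncard_image_of_injective _ Subtype.val_injective]
  rw [h1, ← Set.ncard_image_of_injective U' Subtype.val_injective]
  exact hsp _

lemma endsOpt_loopfree (hg : ∀ (w : V) (h : w ≠ v), g w = ⟨w, h⟩)
    (hloop : ∀ e : E, ¬ (ends e).IsDiag) {x' y' : Vd v} (hxy : x' ≠ y') :
    ∀ o : Option (Ed ends v), ¬ (endsOpt ends v g x' y' o).IsDiag := by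
  rintro (_ | e)
  · intro h
    exact hxy (Sym2.mk_isDiag_iff.1 h)
  · exact endsDel_loopfree hg hloop e

lemma sparse_opt (hg : ∀ (w : V) (h : w ≠ v), g w = ⟨w, h⟩) (hsp : Sparse ends)
    {x y : V} {x' y' : Vd v} (hx' : x'.val = x) (hy' : y'.val = y)
    (hgood : ∀ U : Set V, x ∈ U → y ∈ U → v ∉ U →
      (inside ends U).ncard + 1 ≤ 2 * U.ncard - 2) :
    Sparse (endsOpt ends v g x' y') := by
  intro U'
  have hdiff : inside (endsOpt ends v g x' y') U' \ {none}
      = some '' (inside (endsDel ends v g) U') := by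
    ext o
    match o with
    | none => simp
    | some e =>
      simp only [Set.mem_diff, Set.mem_singleton_iff, reduceCtorEq, not_false_iff, and_true]
      constructor
      · intro h
        exact ⟨e, h, rfl⟩
      · rintro ⟨e', he', heq⟩
        rcases Option.some_injective _ heq
        exact he'
  have hcount : (inside (endsDel ends v g) U').ncard
      = (inside ends (Subtype.val '' U')).ncard := by
    rw [← insideDel hg U', Set.ncard_image_of_injective _ Subtype.val_injective]
  have himg : (some '' (inside (endsDel ends v g) U')).ncard
      = (inside ends (Subtype.val '' U')).ncard := by
    rw [Set.ncard_image_of_injective _ (Option.some_injective _), hcount]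
  have hUcard : U'.ncard = (Subtype.val '' U').ncard :=
    (Set.ncard_image_of_injective U' Subtype.val_injective).symm
  by_cases hno : (none : Option (Ed ends v)) ∈ inside (endsOpt ends v g x' y') U'
  · have hxy' : x' ∈ U' ∧ y' ∈ U' :=
      (inside_pair (ends := endsOpt ends v g x' y') (e := none) rfl).1 hno
    have hxU : x ∈ Subtype.val '' U' := ⟨x', hxy'.1, hx'⟩
    have hyU : y ∈ Subtype.val '' U' := ⟨y', hxy'.2, hy'⟩
    have hvU : v ∉ Subtype.val '' U' := by rintro ⟨w', -, hw'⟩; exact w'.2 hw'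
    have hg' := hgood _ hxU hyU hvU
    have hsplit := Set.ncard_diff_singleton_add_one hno (Set.toFinite _)
    rw [hdiff, himg] at hsplit
    rw [hUcard]
    omega
  · have : inside (endsOpt ends v g x' y') U' = some '' (inside (endsDel ends v g) U') := by
      rw [← hdiff, Set.diff_singleton_eq_self hno]
    rw [this, himg, hUcard]
    exact hsp _

end sparsetransfer

-- ===== part8.lean =====

variable {ends : E → Sym2 V} {F : Set E} {u v w : V}

theorem sparse_bispanning : ∀ (n : ℕ), ∀ {V : Type u₁} {E : Type u₂}
    [Finite V] [Finite E] (ends : E → Sym2 V),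
    Nat.card V = n → (∀ e : E, ¬ (ends e).IsDiag) → Nat.card E = 2 * n - 2 →
    Sparse ends → Bispanning ends := by
  intro n
  induction n using Nat.strong_induction_on with
  | _ n ih =>
  intro V E _ _ ends hn hloop hE hsp
  rcases Nat.lt_or_ge n 2 with hn2 | hn2
  · -- trivial case: at most one vertex
    have hE0 : Nat.card E = 0 := by omega
    have hVsub : Subsingleton V := by
      have : Nat.card V ≤ 1 := by omega
      exact Finite.card_le_one_iff_subsingleton.1 this
    have hEempty : IsEmpty E := by
      rcases Nat.card_eq_zero.1 hE0 with h | h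
      · exact h
      · exact absurd h (not_infinite_iff_finite.2 inferInstance)
    have hconn : Conn ends (∅ : Set E) := by
      intro a b
      rw [Subsingleton.elim a b]
      exact reach_refl b
    have hcard0 : Nat.card (∅ : Set E) = Nat.card V - 1 := by
      rw [Nat.card_coe_set_eq, Set.ncard_empty, hn]
      omega
    exact ⟨∅, ∅, by
        rw [Set.union_self, Set.eq_univ_iff_forall]
        exact fun e => (hEempty.false e).elim,
      disjoint_bot_left, ⟨hconn, hcard0⟩, ⟨hconn, hcard0⟩⟩
  · -- main case
    have hEcard : Nat.card E = 2 * Nat.card V - 2 := by rw [hn]; exact hE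
    obtain ⟨v, hv3⟩ := exists_low_deg hloop (by omega) hEcard
    have hv2 := two_le_deg hsp hEcard (by omega) v
    -- the vertex map
    have hVnontriv : Nontrivial V := Finite.one_lt_card_iff_nontrivial.1 (by omega)
    obtain ⟨w₀, hw₀⟩ := exists_ne v
    classical
    obtain ⟨g, hg⟩ : ∃ g : V → Vd v, ∀ (w : V) (h : w ≠ v), g w = ⟨w, h⟩ :=
      ⟨fun w => if h : w = v then ⟨w₀, hw₀⟩ else ⟨w, h⟩, fun w h => dif_neg h⟩
    have hcVd : Nat.card (Vd v) = n - 1 := by rw [card_Vd, hn]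
    interval_cases hdegv : (degSet ends v).ncard
    · -- degree 2
      obtain ⟨e₁, e₂, h12, hdeg⟩ := Set.ncard_eq_two.1 hdegv
      have hv₁ : v ∈ ends e₁ := by
        have : e₁ ∈ degSet ends v := by rw [hdeg]; exact Or.inl rfl
        exact this
      have hv₂ : v ∈ ends e₂ := by
        have : e₂ ∈ degSet ends v := by rw [hdeg]; exact Or.inr rfl
        exact this
      obtain ⟨a, ha, he₁⟩ := exists_other (hloop e₁) hv₁
      obtain ⟨b, hb, he₂⟩ := exists_other (hloop e₂) hv₂
      refine deg2_lift hg (by omega) hdeg h12 he₁ ha he₂ hb ?_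
      refine ih (n - 1) (by omega) (endsDel ends v g) hcVd
        (endsDel_loopfree hg hloop) ?_ (sparse_del hg hsp)
      rw [card_Ed, hdegv]
      omega
    · -- degree 3
      obtain ⟨e₁, e₂, e₃, h12, h13, h23, hdeg⟩ := Set.ncard_eq_three.1 hdegv
      have hmem : ∀ e ∈ ({e₁, e₂, e₃} : Set E), v ∈ ends e := by
        intro e he
        have : e ∈ degSet ends v := by rw [hdeg]; exact he
        exact this
      obtain ⟨a₁, ha₁, he₁⟩ := exists_other (hloop e₁) (hmem e₁ (Or.inl rfl))
      obtain ⟨a₂, ha₂, he₂⟩ := exists_other (hloop e₂) (hmem e₂ (Or.inr (Or.inl rfl)))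
      obtain ⟨a₃, ha₃, he₃⟩ := exists_other (hloop e₃) (hmem e₃ (Or.inr (Or.inr rfl)))
      obtain ⟨f₁, f₂, f₃, x, y, z, hdeg', hf12, hf13, hf23, hf₁, hx, hf₂, hy, hf₃, hz,
        hxy, hgood⟩ := good_pair hsp hloop hdeg h12 h13 h23 he₁ ha₁ he₂ ha₂ he₃ ha₃
      have hn3 : 3 ≤ n := by
        have h3card : 3 ≤ Nat.card E := by
          rw [← hdegv, ← Set.ncard_univ]
          exact Set.ncard_le_ncard (Set.subset_univ _) (Set.toFinite _)
        omega
      set x' : Vd v := ⟨x, hx⟩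
      set y' : Vd v := ⟨y, hy⟩
      have hxy' : x' ≠ y' := fun h => hxy (congrArg Subtype.val h)
      refine deg3_lift (x' := x') (y' := y') hg (by omega) hdeg' hf12 hf13 hf23
        hf₁ hx hf₂ hy hf₃ hz rfl rfl ?_
      refine ih (n - 1) (by omega) (endsOpt ends v g x' y') hcVd
        (endsOpt_loopfree hg hloop hxy') ?_ (sparse_opt hg hsp rfl rfl hgood)
      have : Nat.card (Option (Ed ends v)) = Nat.card (Ed ends v) + 1 := Finite.card_option
      rw [this, card_Ed, hdegv]
      omega


end MG

/-- Nash-Williams/Tutte arboricity criterion for two trees: a graph with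
`|E| = 2|V| - 2` is bispanning if and only if for every partition of `V`, the number
of edges with ends in different parts is at least `2(|P| - 1)`. -/
theorem nash_williams_bispanning {V E : Type*} [Finite V] [Finite E]
    (ends : E → Sym2 V) (hloop : ∀ e : E, ¬ (ends e).IsDiag)
    (hcard : Nat.card E = 2 * Nat.card V - 2) :
    MG.Bispanning ends ↔
      ∀ s : Setoid V,
        2 * (Nat.card (Quotient s) - 1) ≤
          Nat.card {e : E | ¬ (Sym2.map (Quotient.mk s) (ends e)).IsDiag} := by
  constructor
  · exact MG.partition_of_bispanning
  · intro h
    exact MG.sparse_bispanning (Nat.card V) ends rfl hloop hcard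
      (MG.sparse_of_partition hloop hcard h)
end
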